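/- arXiv:2004.11998 — 2 statements merged into one kernel-verified Lean document; each statement's English description precedes it below -/
import Mathlib

section
/- Let n ≥ 1, let A be a finite linearly ordered alphabet, and let X ⊆ A^n be stable under the symmetric group S_n acting on positions, i.e., if (w_1,…,w_n) ∈ X then (w_{σ(1)},…,w_{σ(n)}) ∈ X for every permutation σ of {1,…,n}. Then the triple (X, X^inv(t), C) exhibits the cyclic sieving phenomenon, where C is the cyclic group of order n acting on X by cyclic shifts. -/
/-- The (leftward) cyclic shift on words of length `n`:
`c(w₁,…,wₙ) = (w₂,…,wₙ,w₁)`. -/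
def cshift {A : Type*} {n : ℕ} (w : Fin n → A) : Fin n → A :=
  fun i => w ⟨((i : ℕ) + 1) % n, Nat.mod_lt _ i.pos⟩

/-- The major index of a word: `maj w = Σ_{1 ≤ i ≤ n-1, w_i > w_{i+1}} i`
(here positions are 0-indexed, so position `i : Fin n` is the `(i+1)`-st letter). -/
def majIdx {A : Type*} [LinearOrder A] {n : ℕ} (w : Fin n → A) : ℕ :=
  ∑ i : Fin n,
    if h : (i : ℕ) + 1 < n then (if w ⟨(i : ℕ) + 1, h⟩ < w i then (i : ℕ) + 1 else 0) else 0

/-- The number of cyclic descents of a word, `cdes w = #{i : w_i > w_{i+1}}`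
with indices read cyclically (`w_{n+1} := w_1`). -/
def cdes {A : Type*} [LinearOrder A] {n : ℕ} (w : Fin n → A) : ℕ :=
  (Finset.univ.filter fun i : Fin n =>
    w ⟨((i : ℕ) + 1) % n, Nat.mod_lt _ i.pos⟩ < w i).card

/-- The inversion number of a word: `inv w = #{(i,j) : i < j, w_i > w_j}`. -/
def invNum {A : Type*} [LinearOrder A] {n : ℕ} (w : Fin n → A) : ℕ :=
  (Finset.univ.filter fun p : Fin n × Fin n => p.1 < p.2 ∧ w p.2 < w p.1).card

/-- The Hamming weight of a binary word: the number of ones. -/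
def wt {n : ℕ} (w : Fin n → Bool) : ℕ :=
  (Finset.univ.filter fun i => w i = true).card

/-- The triple `(X, Σ_{x ∈ X} t^{stat x}, C)` exhibits the cyclic sieving phenomenon,
where `C` is the cyclic group of order `n` generated by the cyclic shift `c` acting on `X`:
for every `d`, the number of fixed points of `c^d` on `X` equals the evaluation of
`Σ_{x ∈ X} t^{stat x}` at `t = ζ^d`, with `ζ = exp(2πi/n)`. -/
def exhibitsCSP {A : Type*} [DecidableEq A] {n : ℕ} (X : Finset (Fin n → A))
    (stat : (Fin n → A) → ℕ) : Prop :=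
  ∀ d : ℕ,
    ((X.filter fun v => cshift^[d] v = v).card : ℂ) =
      ∑ v ∈ X, Complex.exp (2 * (Real.pi : ℂ) * Complex.I / n) ^ (d * stat v)

open Finset

set_option linter.unusedSectionVars false

namespace CSPaux

lemma invNum_eq_sum {A : Type*} [LinearOrder A] {n : ℕ} (w : Fin n → A) :
    invNum w = ∑ i : Fin n, ∑ j : Fin n, (if i < j ∧ w j < w i then 1 else 0) := by
  rw [invNum, Finset.card_filter, Fintype.sum_prod_type]

lemma wt_eq_sum {n : ℕ} (b : Fin n → Bool) :
    wt b = ∑ i : Fin n, (if b i = true then 1 else 0) := by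
  rw [wt, Finset.card_filter]

lemma bool_lt_iff (x y : Bool) : x < y ↔ (y = true ∧ x = false) := by
  cases x <;> cases y <;> decide

variable {N : ℕ}

/-- the rotation `i ↦ i+1 mod N` as an equiv -/
def rotF (hN : 0 < N) : Fin N ≃ Fin N where
  toFun i := ⟨((i : ℕ) + 1) % N, Nat.mod_lt _ hN⟩
  invFun i := ⟨((i : ℕ) + (N - 1)) % N, Nat.mod_lt _ hN⟩
  left_inv := by
    intro i; ext
    simp only [Nat.mod_add_mod]
    have : (i : ℕ) + 1 + (N - 1) = (i : ℕ) + N := by omega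
    rw [this, Nat.add_mod_right, Nat.mod_eq_of_lt i.isLt]
  right_inv := by
    intro i; ext
    simp only [Nat.mod_add_mod]
    have : (i : ℕ) + (N - 1) + 1 = (i : ℕ) + N := by omega
    rw [this, Nat.add_mod_right, Nat.mod_eq_of_lt i.isLt]

lemma cshift_eq_rotF {A : Type*} (hN : 0 < N) (w : Fin N → A) :
    cshift w = fun i => w (rotF hN i) := rfl

lemma rotF_symm_val (hN : 0 < N) (i : Fin N) (hi : (i : ℕ) ≠ 0) :
    (((rotF hN).symm i : Fin N) : ℕ) = (i : ℕ) - 1 := by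
  show ((i : ℕ) + (N - 1)) % N = (i : ℕ) - 1
  have h1 : (i : ℕ) + (N - 1) = ((i : ℕ) - 1) + N := by
    have := i.isLt; omega
  rw [h1, Nat.add_mod_right, Nat.mod_eq_of_lt (by have := i.isLt; omega)]

lemma rotF_symm_zero_val (hN : 0 < N) :
    (((rotF hN).symm ⟨0, hN⟩ : Fin N) : ℕ) = N - 1 := by
  show (0 + (N - 1)) % N = N - 1
  rw [Nat.zero_add, Nat.mod_eq_of_lt (by omega)]

/-- Key rotation identity for the inversion number of binary words. -/
lemma invNum_cshift (hN : 0 < N) (b : Fin N → Bool) :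
    invNum (cshift b) + (if b ⟨0, hN⟩ = true then N else 0) = invNum b + wt b := by
  set i0 : Fin N := ⟨0, hN⟩ with hi0
  set e := rotF hN with he
  have hsplit : ∀ f : Fin N → ℕ, ∑ i, f i = f i0 + ∑ i ∈ univ.erase i0, f i :=
    fun f => (Finset.add_sum_erase _ f (mem_univ i0)).symm
  have hne : ∀ i : Fin N, i ∈ univ.erase i0 → (i : ℕ) ≠ 0 := by
    intro i hi
    have := Finset.ne_of_mem_erase hi
    intro h; exact this (Fin.ext h)
  have hlast : ∀ j : Fin N, ¬ (e.symm i0 < e.symm j) := by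
    intro j h
    rw [Fin.lt_def, rotF_symm_zero_val hN] at h
    have := ((rotF hN).symm j).isLt; omega
  have hlt0 : ∀ i : Fin N, i ∈ univ.erase i0 → e.symm i < e.symm i0 := by
    intro i hi
    rw [Fin.lt_def, rotF_symm_zero_val hN, rotF_symm_val hN i (hne i hi)]
    have := i.isLt; have := hne i hi; omega
  have hltlt : ∀ i j : Fin N, i ∈ univ.erase i0 → j ∈ univ.erase i0 →
      (e.symm i < e.symm j ↔ i < j) := by
    intro i j hi hj
    rw [Fin.lt_def, Fin.lt_def, rotF_symm_val hN i (hne i hi), rotF_symm_val hN j (hne j hj)]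
    have := hne i hi; have := hne j hj; omega
  have hi0lt : ∀ j : Fin N, j ∈ univ.erase i0 → i0 < j := by
    intro j hj; rw [Fin.lt_def]; have := hne j hj; simp [hi0]; omega
  have hnlt : ∀ i : Fin N, ¬ i < i0 := by
    intro i; rw [Fin.lt_def]; simp [hi0]
  set D : ℕ := ∑ i ∈ univ.erase i0, ∑ j ∈ univ.erase i0,
      (if i < j ∧ b j < b i then 1 else 0) with hD
  have step1 : invNum (cshift b)
      = ∑ i : Fin N, ∑ j : Fin N, (if e.symm i < e.symm j ∧ b j < b i then 1 else 0) := by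
    rw [cshift_eq_rotF hN, invNum, Finset.card_filter]
    rw [show (∑ p : Fin N × Fin N, if p.1 < p.2 ∧ b (rotF hN p.2) < b (rotF hN p.1) then 1 else 0)
        = ∑ p : Fin N × Fin N, (if e.symm p.1 < e.symm p.2 ∧ b p.2 < b p.1 then 1 else 0) from
      Fintype.sum_equiv (Equiv.prodCongr e e) _ _ (by intro p; simp [← he])]
    rw [Fintype.sum_prod_type]
  have lemA : invNum (cshift b)
      = (∑ i ∈ univ.erase i0, (if b i0 < b i then 1 else 0)) + D := by
    rw [step1, hsplit]
    have h0 : (∑ j : Fin N, if e.symm i0 < e.symm j ∧ b j < b i0 then 1 else 0) = 0 :=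
      Finset.sum_eq_zero (fun j _ => by simp [hlast j])
    rw [h0, zero_add]
    have hinner : ∀ i ∈ univ.erase i0,
        (∑ j : Fin N, if e.symm i < e.symm j ∧ b j < b i then 1 else 0)
        = (if b i0 < b i then 1 else 0)
          + ∑ j ∈ univ.erase i0, (if i < j ∧ b j < b i then 1 else 0) := by
      intro i hi
      rw [hsplit]
      congr 1
      · simp [hlt0 i hi]
      · exact Finset.sum_congr rfl (fun j hj => by simp only [hltlt i j hi hj])
    rw [Finset.sum_congr rfl hinner, Finset.sum_add_distrib, ← hD]
  have lemB : invNum b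
      = (∑ j ∈ univ.erase i0, (if b j < b i0 then 1 else 0)) + D := by
    have h1 : (∑ j : Fin N, if i0 < j ∧ b j < b i0 then 1 else 0)
        = ∑ j ∈ univ.erase i0, (if b j < b i0 then 1 else 0) := by
      rw [hsplit]
      have h2 : (if i0 < i0 ∧ b i0 < b i0 then 1 else 0) = 0 := by simp
      rw [h2, zero_add]
      exact Finset.sum_congr rfl (fun j hj => by simp [hi0lt j hj])
    have hinner : ∀ i ∈ univ.erase i0,
        (∑ j : Fin N, if i < j ∧ b j < b i then 1 else 0)
        = ∑ j ∈ univ.erase i0, (if i < j ∧ b j < b i then 1 else 0) := by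
      intro i _
      rw [hsplit]
      have h3 : (if i < i0 ∧ b i0 < b i then 1 else 0) = 0 := by simp [hnlt i]
      rw [h3, zero_add]
    rw [invNum_eq_sum, hsplit, h1, Finset.sum_congr rfl hinner, ← hD]
  have lemC : wt b = (if b i0 = true then 1 else 0)
      + ∑ i ∈ univ.erase i0, (if b i = true then 1 else 0) := by
    rw [wt_eq_sum]; exact hsplit _
  rw [lemA, lemB, lemC]
  have hcard : (univ.erase i0).card = N - 1 := by
    rw [Finset.card_erase_of_mem (mem_univ i0), Finset.card_univ, Fintype.card_fin]
  cases hb : b i0 with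
  | true =>
    have hA : (∑ i ∈ univ.erase i0, if true < b i then 1 else 0) = 0 :=
      Finset.sum_eq_zero (fun i _ => by simp [bool_lt_iff])
    have hBC : (∑ i ∈ univ.erase i0, if b i < true then 1 else 0)
        + (∑ i ∈ univ.erase i0, if b i = true then 1 else 0) = N - 1 := by
      rw [← Finset.sum_add_distrib, ← hcard]
      rw [Finset.sum_congr rfl (fun i (_ : i ∈ univ.erase i0) =>
        show (if b i < true then 1 else 0) + (if b i = true then 1 else 0) = 1 by
          cases hbi : b i <;> simp [bool_lt_iff, hbi])]
      simp
    rw [hA, if_pos rfl, if_pos rfl]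
    omega
  | false =>
    have hA : (∑ i ∈ univ.erase i0, if b i < false then 1 else 0) = 0 :=
      Finset.sum_eq_zero (fun i _ => by simp [bool_lt_iff])
    have hB : (∑ i ∈ univ.erase i0, if false < b i then 1 else 0)
        = ∑ i ∈ univ.erase i0, (if b i = true then 1 else 0) :=
      Finset.sum_congr rfl (fun i _ => by simp [bool_lt_iff])
    rw [hA, hB, if_neg (by decide), if_neg (by decide)]
    omega

def Bset (N K : ℕ) : Finset (Fin N → Bool) := Finset.univ.filter fun b => wt b = K

noncomputable def Bval (q : ℂ) (N K : ℕ) : ℂ := ∑ b ∈ Bset N K, q ^ invNum b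

lemma wt_comp_equiv (e : Fin N ≃ Fin N) (b : Fin N → Bool) :
    wt (fun i => b (e i)) = wt b := by
  unfold wt
  exact Finset.card_equiv e (fun i => by simp)

lemma wt_cshift (hN : 0 < N) (b : Fin N → Bool) : wt (cshift b) = wt b := by
  rw [cshift_eq_rotF hN]
  exact wt_comp_equiv (rotF hN) b

lemma sum_cshift (hN : 0 < N) (K : ℕ) (f : (Fin N → Bool) → ℂ) :
    ∑ b ∈ Bset N K, f (cshift b) = ∑ b ∈ Bset N K, f b := by
  apply Finset.sum_nbij' (i := fun b => cshift b)
    (j := fun b => (fun x => b ((rotF hN).symm x)))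
  · intro b hb
    simp only [Bset, mem_filter, mem_univ, true_and] at hb ⊢
    rw [wt_cshift hN]; exact hb
  · intro b hb
    simp only [Bset, mem_filter, mem_univ, true_and] at hb ⊢
    rw [wt_comp_equiv (rotF hN).symm]; exact hb
  · intro b _
    funext x; rw [cshift_eq_rotF hN]; simp
  · intro b _
    rw [cshift_eq_rotF hN]; funext x; simp
  · intro b _; rfl

lemma Bval_vanish {q : ℂ} (hN : 0 < N) (hqN : q ^ N = 1) {K : ℕ} (hqK : q ^ K ≠ 1) :
    Bval q N K = 0 := by
  have h := sum_cshift hN K (fun b => q ^ invNum b)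
  have key : ∀ b ∈ Bset N K, q ^ invNum (cshift b) = q ^ K * q ^ invNum b := by
    intro b hb
    simp only [Bset, mem_filter, mem_univ, true_and] at hb
    have hid := invNum_cshift hN b
    rw [hb] at hid
    have := congrArg (fun t => q ^ t) hid
    simp only [pow_add] at this
    have hone : q ^ (if b ⟨0, hN⟩ = true then N else 0) = 1 := by
      split <;> simp [hqN]
    rw [hone, mul_one] at this
    rw [this]; ring
  rw [Finset.sum_congr rfl key, ← Finset.mul_sum] at h
  have : (q ^ K - 1) * Bval q N K = 0 := by
    rw [sub_mul, one_mul, Bval]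
    rw [h]; ring
  rcases mul_eq_zero.mp this with h1 | h2
  · exact absurd (by linear_combination h1) hqK
  · exact h2

lemma zc_eq {M : ℕ} (s : Fin M → Bool) :
    (univ.filter fun j => s j = false).card = M - wt s := by
  have := Finset.card_filter_add_card_filter_not (s := (univ : Finset (Fin M)))
    (fun i => s i = true)
  have he : (univ.filter fun i => ¬ s i = true) = (univ.filter fun j => s j = false) := by
    apply Finset.filter_congr; intro i _; simp
  rw [he] at this
  simp only [Finset.card_univ, Fintype.card_fin] at this
  unfold wt; omega

lemma wt_append {M : ℕ} (p : Fin N → Bool) (s : Fin M → Bool) :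
    wt (Fin.append p s) = wt p + wt s := by
  rw [wt_eq_sum, Fin.sum_univ_add]
  simp only [Fin.append_left, Fin.append_right]
  rw [← wt_eq_sum, ← wt_eq_sum]

lemma invNum_append {M : ℕ} (p : Fin N → Bool) (s : Fin M → Bool) :
    invNum (Fin.append p s) = invNum p + invNum s + wt p * (M - wt s) := by
  have hcast_lt : ∀ i j : Fin N, Fin.castAdd M i < Fin.castAdd M j ↔ i < j := by
    intro i j; rw [Fin.lt_def, Fin.lt_def]; simp
  have hnat_lt : ∀ i j : Fin M, Fin.natAdd N i < Fin.natAdd N j ↔ i < j := by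
    intro i j; rw [Fin.lt_def, Fin.lt_def]; simp
  have hcn : ∀ (i : Fin N) (j : Fin M), Fin.castAdd M i < Fin.natAdd N j := by
    intro i j; rw [Fin.lt_def]; simp; have := i.isLt; omega
  have hnc : ∀ (i : Fin M) (j : Fin N), ¬ (Fin.natAdd N i < Fin.castAdd M j) := by
    intro i j; rw [Fin.lt_def]; simp; have := j.isLt; omega
  rw [invNum_eq_sum, Fin.sum_univ_add]
  have hrow1 : ∀ i : Fin N,
      (∑ j : Fin (N + M), if Fin.castAdd M i < j ∧
          Fin.append p s j < Fin.append p s (Fin.castAdd M i) then 1 else 0)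
      = (∑ j : Fin N, if i < j ∧ p j < p i then 1 else 0)
        + (if p i = true then 1 else 0) * (∑ j : Fin M, if s j = false then 1 else 0) := by
    intro i
    rw [Fin.sum_univ_add]
    congr 1
    · apply Finset.sum_congr rfl; intro j _
      simp only [Fin.append_left, hcast_lt]
    · rw [Finset.mul_sum]
      apply Finset.sum_congr rfl; intro j _
      simp only [Fin.append_left, Fin.append_right, hcn i j, true_and]
      by_cases h1 : p i = true <;> by_cases h2 : s j = false <;>
        simp [bool_lt_iff, h1, h2]
  have hrow2 : ∀ i : Fin M,
      (∑ j : Fin (N + M), if Fin.natAdd N i < j ∧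
          Fin.append p s j < Fin.append p s (Fin.natAdd N i) then 1 else 0)
      = ∑ j : Fin M, if i < j ∧ s j < s i then 1 else 0 := by
    intro i
    rw [Fin.sum_univ_add]
    have hz : (∑ j : Fin N, if Fin.natAdd N i < Fin.castAdd M j ∧
        Fin.append p s (Fin.castAdd M j) < Fin.append p s (Fin.natAdd N i) then 1 else 0) = 0 :=
      Finset.sum_eq_zero (fun j _ => by simp [hnc i j])
    rw [hz, zero_add]
    apply Finset.sum_congr rfl; intro j _
    simp only [Fin.append_right, hnat_lt]
  rw [Finset.sum_congr rfl (fun i _ => hrow1 i), Finset.sum_congr rfl (fun i _ => hrow2 i)]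
  rw [Finset.sum_add_distrib, ← Finset.sum_mul, ← invNum_eq_sum, ← invNum_eq_sum, ← wt_eq_sum]
  have : (∑ j : Fin M, if s j = false then 1 else 0) = M - wt s := by
    rw [← zc_eq s, Finset.card_filter]
  rw [this]
  ring

lemma append_split {M : ℕ} (w : Fin (N + M) → Bool) :
    Fin.append (fun i => w (Fin.castAdd M i)) (fun j => w (Fin.natAdd N j)) = w := by
  funext x
  induction x using Fin.addCases with
  | left i => rw [Fin.append_left]
  | right j => rw [Fin.append_right]

/-- the splitting identity for `Bval` -/
lemma Bval_split (q : ℂ) (N M K : ℕ) :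
    Bval q (N + M) K = ∑ z ∈ Finset.HasAntidiagonal.antidiagonal K,
      q ^ (z.1 * (M - z.2)) * (Bval q N z.1 * Bval q M z.2) := by
  classical
  have step1 : Bval q (N + M) K
      = ∑ z ∈ (Finset.univ ×ˢ Finset.univ : Finset ((Fin N → Bool) × (Fin M → Bool))).filter
          (fun z => wt z.1 + wt z.2 = K),
          q ^ (invNum z.1 + invNum z.2 + wt z.1 * (M - wt z.2)) := by
    rw [Bval]
    apply Finset.sum_nbij' (i := fun w => ((fun i => w (Fin.castAdd M i)), (fun j => w (Fin.natAdd N j))))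
      (j := fun z => Fin.append z.1 z.2)
    · intro w hw
      simp only [Bset, mem_filter, mem_univ, true_and, Finset.mem_product, and_self] at hw ⊢
      rw [← wt_append, append_split]; exact hw
    · intro z hz
      simp only [Bset, mem_filter, mem_univ, true_and, Finset.mem_product, and_self] at hz ⊢
      rw [wt_append]; exact hz
    · intro w _; exact append_split w
    · intro z _
      simp only [Fin.append_left, Fin.append_right]
    · intro w hw
      simp only [Bset, mem_filter, mem_univ, true_and] at hw
      rw [← invNum_append, append_split]
  rw [step1]
  rw [← Finset.sum_fiberwise_of_maps_to (g := fun z => (wt z.1, wt z.2))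
    (t := Finset.HasAntidiagonal.antidiagonal K) (fun z hz => Finset.HasAntidiagonal.mem_antidiagonal.mpr (by
      simp only [mem_filter, Finset.mem_product, mem_univ, true_and, and_self] at hz
      exact hz))]
  apply Finset.sum_congr rfl
  intro z hz
  have hzK : z.1 + z.2 = K := Finset.HasAntidiagonal.mem_antidiagonal.mp hz
  have hset : ((Finset.univ ×ˢ Finset.univ : Finset ((Fin N → Bool) × (Fin M → Bool))).filter
      (fun y => wt y.1 + wt y.2 = K)).filter (fun y => (wt y.1, wt y.2) = z)
      = Bset N z.1 ×ˢ Bset M z.2 := by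
    ext y
    simp only [mem_filter, Finset.mem_product, mem_univ, true_and, Bset, Prod.ext_iff]
    omega
  rw [hset, Finset.sum_product]
  rw [Bval, Bval, Finset.sum_mul_sum, Finset.mul_sum]
  apply Finset.sum_congr rfl
  intro p hp
  rw [Finset.mul_sum]
  apply Finset.sum_congr rfl
  intro s hs
  simp only [Bset, mem_filter, mem_univ, true_and] at hp hs
  rw [hp, hs, pow_add, pow_add]
  ring

lemma invNum_const' {A : Type*} [LinearOrder A] {m : ℕ} (c : A) :
    invNum (fun _ : Fin m => c) = 0 := by simp [invNum]

lemma wt_false' {N : ℕ} : wt (fun _ : Fin N => false) = 0 := by simp [wt]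

lemma wt_true' {N : ℕ} : wt (fun _ : Fin N => true) = N := by simp [wt]

lemma wt_le {N : ℕ} (b : Fin N → Bool) : wt b ≤ N := by
  simpa [wt] using (Finset.card_filter_le Finset.univ (fun i => b i = true))

lemma Bset_zero (N : ℕ) : Bset N 0 = {fun _ => false} := by
  ext b
  simp only [Bset, mem_filter, mem_univ, true_and, mem_singleton]
  constructor
  · intro h; funext i
    have h2 : (Finset.univ.filter fun i => b i = true) = ∅ := Finset.card_eq_zero.mp h
    have hb := Finset.eq_empty_iff_forall_notMem.mp h2 i
    simp only [mem_filter, mem_univ, true_and] at hb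
    simp [hb]
  · rintro rfl; exact wt_false'

lemma Bset_self (N : ℕ) : Bset N N = {fun _ => true} := by
  ext b
  simp only [Bset, mem_filter, mem_univ, true_and, mem_singleton]
  constructor
  · intro h; funext i
    have h2 : (Finset.univ.filter fun i => b i = true) = Finset.univ := by
      apply Finset.eq_univ_of_card; simpa [wt] using h
    have := (Finset.eq_univ_iff_forall.mp h2) i
    simpa using this
  · rintro rfl; exact wt_true'

lemma Bset_of_gt {N K : ℕ} (h : N < K) : Bset N K = ∅ := by
  apply Finset.eq_empty_iff_forall_notMem.mpr
  intro b hb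
  simp only [Bset, mem_filter, mem_univ, true_and] at hb
  exact absurd (hb ▸ wt_le b) (by omega)

lemma Bval_zero (q : ℂ) (N : ℕ) : Bval q N 0 = 1 := by
  simp [Bval, Bset_zero, invNum_const']

lemma Bval_self (q : ℂ) (N : ℕ) : Bval q N N = 1 := by
  simp [Bval, Bset_self, invNum_const']

lemma Bval_of_gt {N K : ℕ} (h : N < K) (q : ℂ) : Bval q N K = 0 := by
  simp [Bval, Bset_of_gt h]

/-- the block recursion at a primitive `L`-th root of unity -/
lemma Bval_block {q : ℂ} {L : ℕ} (hL : 0 < L) (hq : ∀ j : ℕ, q ^ j = 1 ↔ L ∣ j) (N K : ℕ) :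
    Bval q (N + L) K = Bval q N K + (if L ≤ K then Bval q N (K - L) else 0) := by
  have hq1 : q ^ L = 1 := (hq L).mpr dvd_rfl
  have hmid : ∀ t : ℕ, 0 < t → t < L → Bval q L t = 0 := by
    intro t ht1 ht2
    apply Bval_vanish hL hq1
    intro hcon
    have := (hq t).mp hcon
    exact absurd (Nat.le_of_dvd ht1 this) (by omega)
  rw [Bval_split]
  rw [Finset.Nat.sum_antidiagonal_eq_sum_range_succ (fun a t =>
    q ^ (a * (L - t)) * (Bval q N a * Bval q L t))]
  have hterm : ∀ k ∈ Finset.range (K + 1),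
      q ^ (k * (L - (K - k))) * (Bval q N k * Bval q L (K - k))
      = (if k = K then Bval q N K else 0)
        + (if k + L = K then Bval q N (K - L) else 0) := by
    intro k hk
    rw [Finset.mem_range] at hk
    by_cases h0 : k = K
    · subst h0
      rw [if_pos rfl, if_neg (by omega), Nat.sub_self, Bval_zero]
      have h2 : q ^ (k * (L - 0)) = 1 := by
        rw [Nat.sub_zero, show k * L = L * k by ring, pow_mul, hq1, one_pow]
      rw [h2]; ring
    · by_cases hLt : k + L = K
      · have ht : K - k = L := by omega
        rw [if_neg h0, if_pos hLt, ht, Bval_self, Nat.sub_self, Nat.mul_zero, pow_zero,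
          show K - L = k by omega]
        ring
      · rw [if_neg h0, if_neg hLt]
        by_cases hgt : L < K - k
        · rw [Bval_of_gt hgt]; ring
        · rw [hmid (K - k) (by omega) (by omega)]; ring
  rw [Finset.sum_congr rfl hterm, Finset.sum_add_distrib]
  congr 1
  · rw [Finset.sum_ite_eq' (Finset.range (K+1)) K (fun _ => Bval q N K)]
    simp
  · by_cases h : L ≤ K
    · rw [Finset.sum_congr rfl (fun k (_ : k ∈ Finset.range (K+1)) =>
        show (if k + L = K then Bval q N (K - L) else 0)
          = (if k = K - L then Bval q N (K - L) else 0) by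
        congr 1
        simp only [eq_iff_iff]
        omega)]
      rw [Finset.sum_ite_eq' (Finset.range (K+1)) (K - L) (fun _ => Bval q N (K - L))]
      rw [if_pos (by rw [Finset.mem_range]; omega), if_pos h]
    · rw [if_neg h]
      exact Finset.sum_eq_zero (fun k hk => by
        rw [Finset.mem_range] at hk; rw [if_neg (by omega)])

/-- q-Lucas for binary words: evaluation of the inversion generating function at a
primitive `L`-th root of unity. -/
lemma Bval_lucas {q : ℂ} {L : ℕ} (hL : 0 < L) (hq : ∀ j : ℕ, q ^ j = 1 ↔ L ∣ j)
    (m : ℕ) : ∀ K : ℕ, Bval q (L * m) K = if L ∣ K then (Nat.choose m (K / L) : ℂ) else 0 := by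
  induction m with
  | zero =>
    intro K
    rcases Nat.eq_zero_or_pos K with rfl | hK
    · simp [Bval_zero]
    · rw [Bval_of_gt (by omega)]
      by_cases h : L ∣ K
      · rw [if_pos h, Nat.choose_eq_zero_of_lt]
        · simp
        · exact Nat.div_pos (Nat.le_of_dvd hK h) hL
      · rw [if_neg h]
  | succ m ih =>
    intro K
    rw [show L * (m + 1) = L * m + L by ring, Bval_block hL hq, ih K]
    by_cases h : L ∣ K
    · rcases Nat.eq_zero_or_pos K with rfl | hK
      · simp [hL.ne']
      · have hLK : L ≤ K := Nat.le_of_dvd hK h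
        have hdvd' : L ∣ K - L := Nat.dvd_sub h dvd_rfl
        rw [if_pos hLK, ih (K - L), if_pos h, if_pos hdvd', if_pos h]
        have hpos : 0 < K / L := Nat.div_pos hLK hL
        have hdiv : (K - L) / L = K / L - 1 := by
          obtain ⟨c, rfl⟩ := h
          have h1 : L * c - L = L * (c - 1) := by
            cases c with
            | zero => simp
            | succ c' => rw [Nat.add_sub_cancel, Nat.mul_succ]; omega
          rw [h1, Nat.mul_div_cancel_left _ hL, Nat.mul_div_cancel_left _ hL]
        rw [hdiv]
        have hch : Nat.choose (m + 1) (K / L)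
            = Nat.choose m (K / L) + Nat.choose m (K / L - 1) := by
          have h9 : K / L = (K / L - 1) + 1 := by omega
          rw [h9, Nat.choose_succ_succ, Nat.add_sub_cancel]
          simp only [Nat.succ_eq_add_one]
          omega
        rw [hch]
        push_cast
        ring
    · rw [if_neg h, if_neg h]
      by_cases hLK : L ≤ K
      · rw [if_pos hLK, ih (K - L), if_neg (fun hcon => h (by
          have := Nat.dvd_add hcon (dvd_refl L)
          rwa [Nat.sub_add_cancel hLK] at this))]
        simp
      · simp [hLK]

section Alph

variable {A : Type*} [LinearOrder A] [Fintype A] {n : ℕ}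

def cnt (w : Fin n → A) (a : A) : ℕ := (Finset.univ.filter fun i => w i = a).card

def classF (u : Fin n → A) : Finset (Fin n → A) :=
  Finset.univ.filter fun w => ∀ a, cnt w a = cnt u a

def cardLE (w : Fin n → A) (a : A) : ℕ := (Finset.univ.filter fun i => w i ≤ a).card

lemma mem_classF {u w : Fin n → A} : w ∈ classF u ↔ ∀ a, cnt w a = cnt u a := by
  simp [classF]

lemma self_mem_classF (u : Fin n → A) : u ∈ classF u := mem_classF.mpr (fun _ => rfl)

lemma sum_emb {M : Type*} [AddCommMonoid M] {m : ℕ} (s : Finset (Fin n)) (h : s.card = m)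
    (f : Fin n → M) : ∑ j : Fin m, f (s.orderEmbOfFin h j) = ∑ x ∈ s, f x := by
  apply Finset.sum_nbij (i := s.orderEmbOfFin h)
  · intro j _; exact Finset.orderEmbOfFin_mem s h j
  · intro a _ b _ hab; exact (s.orderEmbOfFin h).injective hab
  · intro x hx
    have hx' : x ∈ Set.range (s.orderEmbOfFin h) := by
      rw [Finset.range_orderEmbOfFin]; exact hx
    obtain ⟨j, hj⟩ := hx'
    exact ⟨j, by simp, hj⟩
  · intro j _; rfl

lemma card_filter_emb {m : ℕ} (s : Finset (Fin n)) (h : s.card = m) (P : Fin n → Prop)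
    [DecidablePred P] :
    (Finset.univ.filter fun j : Fin m => P (s.orderEmbOfFin h j)).card = (s.filter P).card := by
  rw [Finset.card_filter, Finset.card_filter]
  exact sum_emb s h (fun x => if P x then 1 else 0)

def maskF (w : Fin n → A) (astar : A) : Fin n → Bool := fun i => decide (w i = astar)

/-- positions where `w` is not the top letter -/
def nes (w : Fin n → A) (astar : A) : Finset (Fin n) :=
  Finset.univ.filter fun i => ¬ (w i = astar)

def subF (w : Fin n → A) {m : ℕ} (s : Finset (Fin n)) (h : s.card = m) : Fin m → A :=
  fun j => w (s.orderEmbOfFin h j)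

lemma wt_maskF (w : Fin n → A) (astar : A) : wt (maskF w astar) = cnt w astar := by
  unfold wt maskF cnt
  congr 1
  apply Finset.filter_congr; intro i _; simp

lemma card_nes (w : Fin n → A) (astar : A) : (nes w astar).card = n - cnt w astar := by
  have := Finset.card_filter_add_card_filter_not (s := (Finset.univ : Finset (Fin n)))
    (fun i => w i = astar)
  simp only [Finset.card_univ, Fintype.card_fin] at this
  unfold nes cnt
  omega

lemma cnt_subF (w : Fin n → A) (astar : A) {m : ℕ} (h : (nes w astar).card = m) (a : A) :
    cnt (subF w (nes w astar) h) a = if a = astar then 0 else cnt w a := by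
  unfold cnt subF
  rw [card_filter_emb (nes w astar) h (fun x => w x = a)]
  by_cases ha : a = astar
  · subst ha
    rw [if_pos rfl, Finset.card_eq_zero, Finset.filter_eq_empty_iff]
    intro x hx
    simp only [nes, Finset.mem_filter] at hx
    exact hx.2
  · rw [if_neg ha]
    congr 1
    unfold nes
    rw [Finset.filter_filter]
    apply Finset.filter_congr
    intro i _
    constructor
    · rintro ⟨_, h2⟩; exact h2
    · intro h2; exact ⟨fun hc => ha (by rw [← h2, hc]), h2⟩

lemma double_sum_split (P : Fin n → Prop) [DecidablePred P] (f : Fin n → Fin n → ℕ) :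
    ∑ i, ∑ j, f i j
      = ((∑ i ∈ Finset.univ.filter P, ∑ j ∈ Finset.univ.filter P, f i j)
      + (∑ i ∈ Finset.univ.filter P, ∑ j ∈ Finset.univ.filter (fun x => ¬ P x), f i j))
      + ((∑ i ∈ Finset.univ.filter (fun x => ¬ P x), ∑ j ∈ Finset.univ.filter P, f i j)
      + (∑ i ∈ Finset.univ.filter (fun x => ¬ P x),
          ∑ j ∈ Finset.univ.filter (fun x => ¬ P x), f i j)) := by
  rw [← Finset.sum_filter_add_sum_filter_not Finset.univ P (fun i => ∑ j, f i j)]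
  congr 1
  · rw [← Finset.sum_add_distrib]
    exact Finset.sum_congr rfl (fun i _ =>
      (Finset.sum_filter_add_sum_filter_not Finset.univ P _).symm)
  · rw [← Finset.sum_add_distrib]
    exact Finset.sum_congr rfl (fun i _ =>
      (Finset.sum_filter_add_sum_filter_not Finset.univ P _).symm)

lemma invNum_split (w : Fin n → A) (astar : A) (hmax : ∀ i, w i ≤ astar) {m : ℕ}
    (h : (nes w astar).card = m) :
    invNum w = invNum (maskF w astar) + invNum (subF w (nes w astar) h) := by
  have hfn : Finset.univ.filter (fun x => ¬ (w x = astar)) = nes w astar := rfl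
  -- the subword inversion count
  have hsub : invNum (subF w (nes w astar) h)
      = ∑ x ∈ nes w astar, ∑ y ∈ nes w astar, (if x < y ∧ w y < w x then 1 else 0) := by
    rw [invNum_eq_sum]
    have inner : ∀ j : Fin m,
        (∑ j' : Fin m, if j < j' ∧ subF w (nes w astar) h j' < subF w (nes w astar) h j
          then 1 else 0)
        = ∑ y ∈ nes w astar,
            (if (nes w astar).orderEmbOfFin h j < y ∧ w y < w ((nes w astar).orderEmbOfFin h j)
              then 1 else 0) := by
      intro j
      rw [← sum_emb (nes w astar) h]
      apply Finset.sum_congr rfl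
      intro j' _
      congr 1
      simp only [eq_iff_iff]
      constructor
      · rintro ⟨h1, h2⟩; exact ⟨(Finset.orderEmbOfFin _ h).lt_iff_lt.mpr h1, h2⟩
      · rintro ⟨h1, h2⟩; exact ⟨(Finset.orderEmbOfFin _ h).lt_iff_lt.mp h1, h2⟩
    rw [Finset.sum_congr rfl (fun j _ => inner j)]
    exact sum_emb (nes w astar) h
      (fun x => ∑ y ∈ nes w astar, (if x < y ∧ w y < w x then 1 else 0))
  -- the mask inversion count
  have hmask : invNum (maskF w astar)
      = ∑ i ∈ Finset.univ.filter (fun i => w i = astar), ∑ j ∈ nes w astar,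
          (if i < j then 1 else 0) := by
    rw [invNum_eq_sum]
    have hcond : ∀ i j : Fin n, (maskF w astar j < maskF w astar i)
        ↔ (w i = astar ∧ ¬ (w j = astar)) := by
      intro i j
      rw [bool_lt_iff]
      unfold maskF
      simp
    rw [Finset.sum_congr rfl (fun i _ => Finset.sum_congr rfl (fun j _ =>
      (if_congr (and_congr_right (fun _ => hcond i j)) rfl rfl)))]
    rw [double_sum_split (fun i => w i = astar)]
    have z1 : (∑ i ∈ Finset.univ.filter (fun i => w i = astar),
        ∑ j ∈ Finset.univ.filter (fun i => w i = astar),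
        if i < j ∧ w i = astar ∧ ¬ (w j = astar) then 1 else 0) = 0 :=
      Finset.sum_eq_zero (fun i hi => Finset.sum_eq_zero (fun j hj => by
        simp only [Finset.mem_filter] at hj
        simp [hj.2]))
    have z2 : (∑ i ∈ Finset.univ.filter (fun x => ¬ (w x = astar)),
        ∑ j ∈ Finset.univ.filter (fun i => w i = astar),
        if i < j ∧ w i = astar ∧ ¬ (w j = astar) then 1 else 0) = 0 :=
      Finset.sum_eq_zero (fun i hi => Finset.sum_eq_zero (fun j hj => by
        simp only [Finset.mem_filter] at hi
        simp [hi.2]))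
    have z3 : (∑ i ∈ Finset.univ.filter (fun x => ¬ (w x = astar)),
        ∑ j ∈ Finset.univ.filter (fun x => ¬ (w x = astar)),
        if i < j ∧ w i = astar ∧ ¬ (w j = astar) then 1 else 0) = 0 :=
      Finset.sum_eq_zero (fun i hi => Finset.sum_eq_zero (fun j hj => by
        simp only [Finset.mem_filter] at hi
        simp [hi.2]))
    rw [z1, z2, z3, hfn]
    have e1 : ∀ i ∈ Finset.univ.filter (fun i => w i = astar), ∀ j ∈ nes w astar,
        (if i < j ∧ w i = astar ∧ ¬ (w j = astar) then 1 else 0) = (if i < j then 1 else 0) := by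
      intro i hi j hj
      simp only [Finset.mem_filter] at hi
      simp only [nes, Finset.mem_filter] at hj
      simp [hi.2, hj.2]
    rw [Finset.sum_congr rfl (fun i hi => Finset.sum_congr rfl (fun j hj => e1 i hi j hj))]
    omega
  -- now split the main inversion count
  rw [invNum_eq_sum, double_sum_split (fun i => w i = astar), hmask, hsub, hfn]
  have z1 : (∑ i ∈ Finset.univ.filter (fun i => w i = astar),
      ∑ j ∈ Finset.univ.filter (fun i => w i = astar),
      if i < j ∧ w j < w i then 1 else 0) = 0 :=
    Finset.sum_eq_zero (fun i hi => Finset.sum_eq_zero (fun j hj => by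
      simp only [Finset.mem_filter] at hi hj
      rw [if_neg]
      rintro ⟨_, hlt⟩
      rw [hi.2, hj.2] at hlt
      exact lt_irrefl _ hlt))
  have z2 : (∑ i ∈ nes w astar, ∑ j ∈ Finset.univ.filter (fun i => w i = astar),
      if i < j ∧ w j < w i then 1 else 0) = 0 :=
    Finset.sum_eq_zero (fun i hi => Finset.sum_eq_zero (fun j hj => by
      simp only [Finset.mem_filter] at hj
      rw [if_neg]
      rintro ⟨_, hlt⟩
      rw [hj.2] at hlt
      exact absurd (lt_of_lt_of_le hlt (hmax i)) (lt_irrefl _)))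
  have e2 : ∀ i ∈ Finset.univ.filter (fun i => w i = astar), ∀ j ∈ nes w astar,
      (if i < j ∧ w j < w i then 1 else 0) = (if i < j then 1 else 0) := by
    intro i hi j hj
    simp only [Finset.mem_filter] at hi
    simp only [nes, Finset.mem_filter] at hj
    have : w j < w i := by
      rw [hi.2]
      exact lt_of_le_of_ne (hmax j) hj.2
    simp [this]
  rw [z1, z2, Finset.sum_congr rfl (fun i hi => Finset.sum_congr rfl (fun j hj => e2 i hi j hj))]
  omega

lemma orderEmbOfFin_congr {s t : Finset (Fin n)} (hst : s = t) {m : ℕ} (hs : s.card = m)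
    (ht : t.card = m) : s.orderEmbOfFin hs = t.orderEmbOfFin ht := by
  subst hst; rfl

lemma cnt_eq_zero_iff {w : Fin n → A} {a : A} : cnt w a = 0 ↔ ∀ i, w i ≠ a := by
  unfold cnt
  rw [Finset.card_eq_zero, Finset.filter_eq_empty_iff]
  simp

/-- the fundamental product formula for the inversion generating function of a
rearrangement class -/
lemma classSum_eq_prod (q : ℂ) : ∀ (N : ℕ) (u : Fin N → A),
    (∑ w ∈ classF u, q ^ invNum w) = ∏ a : A, Bval q (cardLE u a) (cnt u a) := by
  intro N
  induction N using Nat.strong_induction_on with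
  | _ N ih =>
  intro u
  by_cases hN : N = 0
  · subst hN
    have hcl : classF u = {u} := by
      ext w
      simp only [mem_classF, Finset.mem_singleton]
      constructor
      · intro _; funext i; exact i.elim0
      · rintro rfl; intro a; rfl
    have hinv : invNum u = 0 := by
      rw [invNum_eq_sum]; simp
    rw [hcl, Finset.sum_singleton, hinv, pow_zero]
    rw [Finset.prod_congr rfl (fun a _ => show Bval q (cardLE u a) (cnt u a) = 1 by
      have h1 : cardLE u a = 0 := by simp [cardLE]
      have h2 : cnt u a = 0 := by simp [cnt]
      rw [h1, h2, Bval_zero])]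
    simp
  · have hNpos : 0 < N := Nat.pos_of_ne_zero hN
    obtain ⟨i0, -, hmax'⟩ := Finset.exists_max_image (Finset.univ : Finset (Fin N)) u
      ⟨⟨0, hNpos⟩, Finset.mem_univ _⟩
    set astar := u i0 with hastar
    have hmax : ∀ i, u i ≤ astar := fun i => hmax' i (Finset.mem_univ i)
    set k := cnt u astar with hk
    have hk1 : 0 < k := Finset.card_pos.mpr ⟨i0, Finset.mem_filter.mpr ⟨Finset.mem_univ _, rfl⟩⟩
    have hkN : k ≤ N := by
      rw [hk]; unfold cnt
      simpa using Finset.card_filter_le Finset.univ (fun i => u i = astar)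
    set m := N - k with hm
    have hnes_card : (nes u astar).card = m := by rw [card_nes, ← hk]
    set u' : Fin m → A := subF u (nes u astar) hnes_card with hu'
    -- facts about members of the class
    have hclw : ∀ w ∈ classF u, (∀ i, w i ≤ astar) ∧ cnt w astar = k := by
      intro w hw
      rw [mem_classF] at hw
      constructor
      · intro i
        by_contra hcon
        have hcon' : astar < w i := not_le.mp hcon
        have h0 : cnt u (w i) = 0 := by
          rw [cnt_eq_zero_iff]
          intro j hj
          exact absurd (hj ▸ hmax j) (not_le.mpr hcon')
        have h1 : cnt w (w i) = 0 := (hw (w i)).trans h0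
        rw [cnt_eq_zero_iff] at h1
        exact h1 i rfl
      · exact hw astar
    have hclw' : ∀ w ∈ classF u, (nes w astar).card = m := by
      intro w hw
      rw [card_nes, (hclw w hw).2, ← hm]
    -- value of counts of u'
    have hcnt_u' : ∀ a, cnt u' a = if a = astar then 0 else cnt u a :=
      fun a => cnt_subF u astar hnes_card a
    -- the bijection
    have key : (∑ w ∈ classF u, q ^ invNum w)
        = ∑ z ∈ Bset N k ×ˢ classF u', q ^ invNum z.1 * q ^ invNum z.2 := by
      apply Finset.sum_bij
        (i := fun w hw => ((maskF w astar, subF w (nes w astar) (hclw' w hw)) :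
          (Fin N → Bool) × (Fin m → A)))
      · intro w hw
        rw [Finset.mem_product]
        constructor
        · simp only [Bset, Finset.mem_filter, Finset.mem_univ, true_and]
          rw [wt_maskF, (hclw w hw).2]
        · rw [mem_classF]
          intro a
          rw [cnt_subF w astar (hclw' w hw) a, hcnt_u' a]
          rw [mem_classF] at hw
          by_cases ha : a = astar
          · simp [ha]
          · simp only [if_neg ha]; exact hw a
      · intro w1 hw1 w2 hw2 heq
        rw [Prod.mk.injEq] at heq
        obtain ⟨hm1, hm2⟩ := heq
        have hsets : nes w1 astar = nes w2 astar := by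
          unfold nes
          apply Finset.filter_congr
          intro i _
          have := congrFun hm1 i
          unfold maskF at this
          simp only [decide_eq_decide] at this
          rw [this]
        funext i
        by_cases hi : w1 i = astar
        · have : maskF w1 astar i = true := by unfold maskF; simp [hi]
          rw [hm1] at this
          unfold maskF at this
          simp only [decide_eq_true_eq] at this
          rw [hi, this]
        · have himem : i ∈ nes w1 astar := Finset.mem_filter.mpr ⟨Finset.mem_univ _, hi⟩
          have : i ∈ Set.range ((nes w1 astar).orderEmbOfFin (hclw' w1 hw1)) := by
            rw [Finset.range_orderEmbOfFin]; exact himem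
          obtain ⟨j, hj⟩ := this
          have e1 : w1 i = subF w1 (nes w1 astar) (hclw' w1 hw1) j := by
            unfold subF; rw [hj]
          have e2 : subF w2 (nes w2 astar) (hclw' w2 hw2) j = w2 i := by
            unfold subF
            rw [← orderEmbOfFin_congr hsets (hclw' w1 hw1) (hclw' w2 hw2), hj]
          rw [e1, hm2, e2]
      · -- surjectivity
        rintro ⟨b, v⟩ hz
        rw [Finset.mem_product] at hz
        obtain ⟨hb, hv⟩ := hz
        simp only [Bset, Finset.mem_filter, Finset.mem_univ, true_and] at hb
        rw [mem_classF] at hv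
        have hvne : ∀ j, v j ≠ astar := by
          have h0 : cnt v astar = 0 := by rw [hv astar, hcnt_u' astar]; simp
          rw [cnt_eq_zero_iff] at h0
          exact h0
        set sb := Finset.univ.filter (fun i => b i = false) with hsb_def
        have hsb : sb.card = m := by
          have := Finset.card_filter_add_card_filter_not
            (s := (Finset.univ : Finset (Fin N))) (fun i => b i = true)
          simp only [Finset.card_univ, Fintype.card_fin] at this
          have he : (Finset.univ.filter fun i => ¬ b i = true) = sb := by
            apply Finset.filter_congr; intro i _; simp
          rw [he] at this
          unfold wt at hb
          omega
        set w : Fin N → A := fun i =>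
          if hbi : b i = true then astar
          else v ((sb.orderIsoOfFin hsb).symm ⟨i, by
            rw [hsb_def]; exact Finset.mem_filter.mpr ⟨Finset.mem_univ _,
              Bool.not_eq_true _ ▸ hbi⟩⟩) with hw_def
        have hwt : ∀ i, b i = true → w i = astar := by
          intro i hbi; rw [hw_def]; simp [hbi]
        have hwf : ∀ i (hbi : b i = false), w i = v ((sb.orderIsoOfFin hsb).symm ⟨i, by
            rw [hsb_def]; exact Finset.mem_filter.mpr ⟨Finset.mem_univ _, hbi⟩⟩) := by
          intro i hbi; rw [hw_def]
          exact dif_neg (by simp [hbi])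
        have hA : maskF w astar = b := by
          funext i
          unfold maskF
          cases hbi : b i with
          | true => simp [hwt i hbi]
          | false =>
            rw [hwf i hbi]
            simp [hvne _]
        have hB : nes w astar = sb := by
          unfold nes
          apply Finset.filter_congr
          intro i _
          cases hbi : b i with
          | true => simp [hwt i hbi, hbi]
          | false => rw [hwf i hbi]; simp [hvne _, hbi]
        have hcw : (nes w astar).card = m := by rw [hB]; exact hsb
        have hC : subF w (nes w astar) hcw = v := by
          funext j
          unfold subF
          rw [orderEmbOfFin_congr hB hcw hsb]
          have hsb_mem : ∀ x, x ∈ sb → b x = false := by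
            intro x hx; rw [hsb_def] at hx; exact (Finset.mem_filter.mp hx).2
          have hmem : (sb.orderEmbOfFin hsb j) ∈ sb := Finset.orderEmbOfFin_mem sb hsb j
          have hbf : b (sb.orderEmbOfFin hsb j) = false := hsb_mem _ hmem
          rw [hwf _ hbf]
          congr 1
          rw [OrderIso.symm_apply_eq]
          exact Subtype.ext (Finset.coe_orderIsoOfFin_apply sb hsb j).symm
        have hD : w ∈ classF u := by
          rw [mem_classF]
          intro a
          by_cases ha : a = astar
          · subst ha
            rw [← wt_maskF, hA, hb, hk]
          · have h1 : cnt w a = cnt (subF w (nes w astar) hcw) a := by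
              rw [cnt_subF w astar hcw a, if_neg ha]
            rw [h1, hC, hv a, hcnt_u' a, if_neg ha]
        exact ⟨w, hD, by
          rw [Prod.ext_iff]
          exact ⟨hA, hC⟩⟩
      · intro w hw
        rw [invNum_split w astar (hclw w hw).1 (hclw' w hw), pow_add]
    rw [key]
    rw [Finset.sum_product]
    have hBv : (∑ x ∈ Bset N k, ∑ y ∈ classF u', q ^ invNum x * q ^ invNum y)
        = Bval q N k * (∑ w ∈ classF u', q ^ invNum w) := by
      rw [Bval, Finset.sum_mul_sum]
    rw [hBv, ih m (by omega) u']
    -- assemble the right-hand side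
    have hLfac : Bval q (cardLE u astar) (cnt u astar) = Bval q N k := by
      have h1 : cardLE u astar = N := by
        unfold cardLE
        rw [Finset.filter_true_of_mem (fun i _ => hmax i)]
        simp
      rw [h1, ← hk]
    have hRfac : Bval q (cardLE u' astar) (cnt u' astar) = 1 := by
      rw [hcnt_u' astar, if_pos rfl, Bval_zero]
    have hfac : ∀ a ∈ Finset.univ.erase astar,
        Bval q (cardLE u' a) (cnt u' a) = Bval q (cardLE u a) (cnt u a) := by
      intro a ha
      have hane : a ≠ astar := Finset.ne_of_mem_erase ha
      rcases lt_or_gt_of_ne hane with hlt | hgt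
      · have h1 : cnt u' a = cnt u a := by rw [hcnt_u' a, if_neg hane]
        have h2 : cardLE u' a = cardLE u a := by
          unfold cardLE
          rw [hu']
          unfold subF
          rw [card_filter_emb (nes u astar) hnes_card (fun x => u x ≤ a)]
          congr 1
          unfold nes
          rw [Finset.filter_filter]
          apply Finset.filter_congr
          intro i _
          constructor
          · rintro ⟨_, h⟩; exact h
          · intro h2
            exact ⟨fun hc => absurd (hc ▸ h2) (not_le.mpr hlt), h2⟩
        rw [h1, h2]
      · have h1 : cnt u a = 0 := by
          rw [cnt_eq_zero_iff]
          intro i hi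
          exact absurd (hi ▸ hmax i) (not_le.mpr hgt)
        have h2 : cnt u' a = 0 := by rw [hcnt_u' a, if_neg hane, h1]
        rw [h1, h2, Bval_zero, Bval_zero]
    rw [← Finset.mul_prod_erase Finset.univ
      (fun a => Bval q (cardLE u' a) (cnt u' a)) (Finset.mem_univ astar), hRfac, one_mul]
    rw [← Finset.mul_prod_erase Finset.univ
      (fun a => Bval q (cardLE u a) (cnt u a)) (Finset.mem_univ astar), hLfac]
    rw [Finset.prod_congr rfl hfac]

lemma cnt_comp_perm (w : Fin n → A) (e : Equiv.Perm (Fin n)) (a : A) :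
    cnt (fun i => w (e i)) a = cnt w a := by
  unfold cnt
  exact Finset.card_equiv e (fun i => by simp)

lemma exists_perm_of_cnt_eq {w u : Fin n → A} (h : ∀ a, cnt w a = cnt u a) :
    ∃ σ : Equiv.Perm (Fin n), w = fun i => u (σ i) := by
  have e : ∀ a : A, {i // w i = a} ≃ {i // u i = a} := by
    intro a
    apply Fintype.equivOfCardEq
    rw [Fintype.card_subtype, Fintype.card_subtype]
    exact h a
  refine ⟨(Equiv.sigmaFiberEquiv w).symm.trans
    ((Equiv.sigmaCongrRight e).trans (Equiv.sigmaFiberEquiv u)), ?_⟩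
  funext i
  exact ((e (w i)) ⟨i, rfl⟩).2.symm

end Alph

section Shift

variable {α : Type*} {n : ℕ}

lemma cshift_iterate (w : Fin n → α) (k : ℕ) (i : Fin n) :
    (cshift^[k] w) i = w ⟨((i : ℕ) + k) % n, Nat.mod_lt _ i.pos⟩ := by
  induction k generalizing w with
  | zero =>
    simp only [Function.iterate_zero, id_eq]
    congr 1
    ext
    simp [Nat.mod_eq_of_lt i.isLt]
  | succ k ih =>
    rw [Function.iterate_succ_apply, ih (cshift w)]
    show w _ = w _
    congr 1
    ext
    show (((i : ℕ) + k) % n + 1) % n = ((i : ℕ) + (k + 1)) % n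
    rw [Nat.mod_add_mod, ← Nat.add_assoc]

lemma cshift_iterate_self (hn : 0 < n) (w : Fin n → α) : cshift^[n] w = w := by
  funext i
  rw [cshift_iterate]
  congr 1
  ext
  simp [Nat.mod_eq_of_lt i.isLt]

lemma fix_gcd (hn : 0 < n) (w : Fin n → α) (d : ℕ) (hd : cshift^[d] w = w) :
    cshift^[Nat.gcd n d] w = w := by
  set g := Nat.gcd n d with hg
  have hg0 : 0 < g := Nat.gcd_pos_of_pos_left d hn
  have hgn : g ∣ n := Nat.gcd_dvd_left n d
  have hgd : g ∣ d := Nat.gcd_dvd_right n d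
  set L := n / g with hLdef
  have hgL : g * L = n := Nat.mul_div_cancel' hgn
  by_cases hL1 : L = 1
  · rw [hL1, Nat.mul_one] at hgL
    rw [hgL]
    exact cshift_iterate_self hn w
  · set d' := d / g with hd'def
    have hdd : g * d' = d := Nat.mul_div_cancel' hgd
    have hco : Nat.Coprime d' L := by
      have := Nat.coprime_div_gcd_div_gcd (m := n) (n := d) hg0
      exact (Nat.Coprime.symm this)
    have hL0 : 0 < L := Nat.div_pos (Nat.le_of_dvd hn hgn) hg0
    have hL2 : 2 ≤ L := by omega
    have htot : 0 < Nat.totient L := Nat.totient_pos.mpr hL0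
    set x := d' ^ (Nat.totient L - 1) with hx_def
    have hx : (d' * x) % L = 1 := by
      have h1 : d' * x = d' ^ (Nat.totient L) := by
        rw [hx_def, ← pow_succ']
        congr 1
        omega
      have h2 := Nat.ModEq.pow_totient hco
      unfold Nat.ModEq at h2
      rw [h1, h2, Nat.mod_eq_of_lt hL2]
    set t := (d' * x) / L with ht_def
    have h2 : d' * x = L * t + 1 := by
      rw [ht_def]
      have := Nat.div_add_mod (d' * x) L
      omega
    have h3 : d * x = g + n * t := by
      calc d * x = g * (d' * x) := by rw [← hdd]; ring
        _ = g * (L * t + 1) := by rw [h2]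
        _ = g + n * t := by rw [← hgL]; ring
    have h4 : cshift^[d * x] w = w := by
      rw [Function.iterate_mul]; exact Function.iterate_fixed hd x
    have h5 : cshift^[n * t] w = w := by
      rw [Function.iterate_mul]; exact Function.iterate_fixed (cshift_iterate_self hn w) t
    calc cshift^[g] w = cshift^[g] (cshift^[n * t] w) := by rw [h5]
      _ = cshift^[g + n * t] w := (Function.iterate_add_apply _ _ _ w).symm
      _ = cshift^[d * x] w := by rw [h3]
      _ = w := h4

lemma periodic_of_fix {g : ℕ} (hg : 0 < g) (hgle : g ≤ n) {w : Fin n → α}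
    (h : cshift^[g] w = w) (i : Fin n) :
    w i = w ⟨(i : ℕ) % g, lt_of_lt_of_le (Nat.mod_lt _ hg) hgle⟩ := by
  have hn : 0 < n := lt_of_lt_of_le hg hgle
  have hstep : ∀ x : Fin n, w ⟨((x : ℕ) + g) % n, Nat.mod_lt _ hn⟩ = w x := by
    intro x
    have := congrFun h x
    rw [cshift_iterate] at this
    exact this
  have claim : ∀ t : ℕ, ∀ x : ℕ, ∀ hx : x < n, w ⟨(x + g * t) % n, Nat.mod_lt _ hn⟩ = w ⟨x, hx⟩ := by
    intro t
    induction t with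
    | zero =>
      intro x hx
      congr 1
      ext
      simp [Nat.mod_eq_of_lt hx]
    | succ t ih =>
      intro x hx
      have e1 : (x + g * (t + 1)) % n = ((x + g * t) % n + g) % n := by
        rw [Nat.mod_add_mod, Nat.mul_succ, ← Nat.add_assoc]
      have e2 := hstep ⟨(x + g * t) % n, Nat.mod_lt _ hn⟩
      have e3 := ih x hx
      rw [← e3, ← e2]
      congr 1
      ext
      exact e1
  have := claim ((i : ℕ) / g) ((i : ℕ) % g) (lt_of_lt_of_le (Nat.mod_lt _ hg) hgle)
  rw [← this]
  congr 1
  ext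
  show (i : ℕ) = ((i : ℕ) % g + g * ((i : ℕ) / g)) % n
  rw [Nat.mod_add_div, Nat.mod_eq_of_lt i.isLt]

end Shift

section Count

variable {A : Type*} [LinearOrder A] [Fintype A] {n : ℕ}

lemma card_residue {g L : ℕ} (hg : 0 < g) (hgL : g * L = n) (j : Fin g) :
    (Finset.univ.filter fun i : Fin n => (i : ℕ) % g = (j : ℕ)).card = L := by
  have h : (Finset.univ.filter fun i : Fin n => (i : ℕ) % g = (j : ℕ)).card
      = (Finset.univ : Finset (Fin L)).card := by
    apply Finset.card_nbij'
      (i := fun i : Fin n => (⟨(i : ℕ) / g, by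
        rw [Nat.div_lt_iff_lt_mul hg, Nat.mul_comm]
        have := i.isLt
        omega⟩ : Fin L))
      (j := fun t : Fin L => (⟨(j : ℕ) + g * (t : ℕ), by
        have h1 : (j : ℕ) + g * (t : ℕ) < g * ((t : ℕ) + 1) := by
          rw [Nat.mul_succ]; have := j.isLt; omega
        have h2 : g * ((t : ℕ) + 1) ≤ g * L := Nat.mul_le_mul_left g t.isLt
        omega⟩ : Fin n))
    · intro i _; exact Finset.mem_univ _
    · intro t _
      simp only [Finset.mem_coe, Finset.mem_filter, Finset.mem_univ, true_and]
      rw [Nat.add_mul_mod_self_left, Nat.mod_eq_of_lt j.isLt]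
    · intro i hi
      simp only [Finset.mem_coe, Finset.mem_filter, Finset.mem_univ, true_and] at hi
      ext
      show (j : ℕ) + g * ((i : ℕ) / g) = (i : ℕ)
      rw [← hi, Nat.mod_add_div]
    · intro t _
      ext
      show ((j : ℕ) + g * (t : ℕ)) / g = (t : ℕ)
      rw [Nat.add_mul_div_left _ _ hg, Nat.div_eq_of_lt j.isLt, Nat.zero_add]
  rw [h, Finset.card_univ, Fintype.card_fin]

lemma cnt_periodic {g L : ℕ} (hg : 0 < g) (hgle : g ≤ n) (hgL : g * L = n) (w : Fin n → A)
    (hper : ∀ i : Fin n, w i = w ⟨(i : ℕ) % g, lt_of_lt_of_le (Nat.mod_lt _ hg) hgle⟩) (a : A) :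
    cnt w a = L * cnt (fun j : Fin g => w ⟨(j : ℕ), lt_of_lt_of_le j.isLt hgle⟩) a := by
  unfold cnt
  rw [Finset.card_eq_sum_card_fiberwise
    (f := fun i : Fin n => (⟨(i : ℕ) % g, Nat.mod_lt _ hg⟩ : Fin g))
    (t := Finset.univ) (fun x _ => Finset.mem_univ _)]
  have hfib : ∀ j : Fin g,
      ((Finset.univ.filter fun i : Fin n => w i = a).filter
        (fun i : Fin n => (⟨(i : ℕ) % g, Nat.mod_lt _ hg⟩ : Fin g) = j)).card
      = if w ⟨(j : ℕ), lt_of_lt_of_le j.isLt hgle⟩ = a then L else 0 := by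
    intro j
    by_cases hj : w ⟨(j : ℕ), lt_of_lt_of_le j.isLt hgle⟩ = a
    · rw [if_pos hj]
      rw [show (Finset.univ.filter fun i : Fin n => w i = a).filter
          (fun i : Fin n => (⟨(i : ℕ) % g, Nat.mod_lt _ hg⟩ : Fin g) = j)
          = Finset.univ.filter (fun i : Fin n => (i : ℕ) % g = (j : ℕ)) from ?_]
      · exact card_residue hg hgL j
      · ext i
        simp only [Finset.mem_filter, Finset.mem_univ, true_and]
        constructor
        · rintro ⟨_, h2⟩
          exact congrArg Fin.val h2
        · intro h1
          constructor
          · rw [hper i]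
            have : (⟨(i : ℕ) % g, lt_of_lt_of_le (Nat.mod_lt _ hg) hgle⟩ : Fin n)
                = ⟨(j : ℕ), lt_of_lt_of_le j.isLt hgle⟩ := by ext; exact h1
            rw [this]; exact hj
          · ext; exact h1
    · rw [if_neg hj, Finset.card_eq_zero, Finset.filter_eq_empty_iff]
      intro i hi
      rw [Finset.mem_filter] at hi
      intro hcon
      apply hj
      have h1 : (i : ℕ) % g = (j : ℕ) := congrArg Fin.val hcon
      have : (⟨(i : ℕ) % g, lt_of_lt_of_le (Nat.mod_lt _ hg) hgle⟩ : Fin n)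
          = ⟨(j : ℕ), lt_of_lt_of_le j.isLt hgle⟩ := by ext; exact h1
      rw [← this, ← hper i]
      exact hi.2
  rw [Finset.sum_congr rfl (fun j _ => hfib j), ← Finset.sum_filter, Finset.sum_const,
    smul_eq_mul, mul_comm]

lemma periodize_fix {α : Type*} {g L d : ℕ} (hg : 0 < g) (hgL : g * L = n) (hgd : g ∣ d)
    (v : Fin g → α) :
    cshift^[d] (fun i : Fin n => v ⟨(i : ℕ) % g, Nat.mod_lt _ hg⟩)
      = (fun i : Fin n => v ⟨(i : ℕ) % g, Nat.mod_lt _ hg⟩) := by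
  have hgn : g ∣ n := ⟨L, hgL.symm⟩
  have hfixg : cshift^[g] (fun i : Fin n => v ⟨(i : ℕ) % g, Nat.mod_lt _ hg⟩)
      = (fun i : Fin n => v ⟨(i : ℕ) % g, Nat.mod_lt _ hg⟩) := by
    funext i
    rw [cshift_iterate]
    congr 1
    ext
    show ((i : ℕ) + g) % n % g = (i : ℕ) % g
    rw [Nat.mod_mod_of_dvd _ hgn, Nat.add_mod_right]
  obtain ⟨e, rfl⟩ := hgd
  rw [Function.iterate_mul]
  exact Function.iterate_fixed hfixg e

lemma exists_word_of_cnt {g : ℕ} (c : A → ℕ) (hc : ∑ a, c a = g) :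
    ∃ v : Fin g → A, ∀ a, cnt v a = c a := by
  set M : Multiset A := ∑ a ∈ Finset.univ, Multiset.replicate (c a) a with hM
  have hcard : Multiset.card M = g := by
    have haux : ∀ (s : Finset A),
        Multiset.card (∑ a ∈ s, Multiset.replicate (c a) a) = ∑ a ∈ s, c a := by
      intro s
      induction s using Finset.cons_induction with
      | empty => simp
      | cons a s ha ih =>
        rw [Finset.sum_cons, Finset.sum_cons, Multiset.card_add, ih, Multiset.card_replicate]
    rw [hM, haux, hc]
  have hlen : M.toList.length = g := by rw [Multiset.length_toList]; exact hcard
  set vec : List.Vector A g := ⟨M.toList, hlen⟩ with hvec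
  refine ⟨fun j => vec.get j, ?_⟩
  intro a
  unfold cnt
  rw [Fin.card_filter_univ_eq_vector_get_eq_count a vec]
  have h1 : vec.toList = M.toList := rfl
  rw [h1]
  have h2 : M.toList.count a = Multiset.count a M := by
    rw [← Multiset.coe_count, Multiset.coe_toList]
  rw [h2, hM, Multiset.count_sum']
  rw [Finset.sum_congr rfl (fun b _ => Multiset.count_replicate a b (c b))]
  simp

lemma cardLE_eq_sum (u : Fin n → A) (a : A) :
    cardLE u a = ∑ b ∈ Finset.univ.filter (fun b => b ≤ a), cnt u b := by
  unfold cardLE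
  rw [Finset.card_eq_sum_card_fiberwise (f := u)
    (t := Finset.univ.filter (fun b => b ≤ a)) (fun x hx => by
      rw [Finset.mem_coe, Finset.mem_filter] at hx ⊢
      exact ⟨Finset.mem_univ _, hx.2⟩)]
  apply Finset.sum_congr rfl
  intro b hb
  rw [Finset.mem_filter] at hb
  unfold cnt
  congr 1
  ext i
  simp only [Finset.mem_filter, Finset.mem_univ, true_and]
  constructor
  · rintro ⟨_, h⟩; exact h
  · intro h; exact ⟨h ▸ hb.2, h⟩

lemma cnt_total (u : Fin n → A) : ∑ a, cnt u a = n := by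
  have := Finset.card_eq_sum_card_fiberwise (f := u) (s := (Finset.univ : Finset (Fin n)))
    (t := Finset.univ) (fun x _ => Finset.mem_univ _)
  simp only [Finset.card_univ, Fintype.card_fin] at this
  conv_rhs => rw [this]
  exact Finset.sum_congr rfl (fun b _ => rfl)

end Count

section Main

variable {A : Type*} [LinearOrder A] [Fintype A] {n : ℕ}

lemma class_csp (hn : 0 < n) (d : ℕ) {q : ℂ}
    (hq : ∀ j : ℕ, q ^ j = 1 ↔ (n / Nat.gcd n d) ∣ j) (u : Fin n → A) :
    (((classF u).filter fun v => cshift^[d] v = v).card : ℂ)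
      = ∑ w ∈ classF u, q ^ invNum w := by
  set g := Nat.gcd n d with hgdef
  set L := n / g with hLdef
  have hg0 : 0 < g := Nat.gcd_pos_of_pos_left d hn
  have hgn : g ∣ n := Nat.gcd_dvd_left n d
  have hgd : g ∣ d := Nat.gcd_dvd_right n d
  have hgL : g * L = n := Nat.mul_div_cancel' hgn
  have hgle : g ≤ n := Nat.le_of_dvd hn hgn
  have hL0 : 0 < L := Nat.div_pos (Nat.le_of_dvd hn hgn) hg0
  have hLn : L ∣ n := ⟨g, by rw [← hgL]; ring⟩
  have hfixcnt : ∀ w ∈ (classF u).filter (fun v => cshift^[d] v = v), ∀ a : A,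
      cnt w a = L * cnt (fun j : Fin g => w ⟨(j : ℕ), lt_of_lt_of_le j.isLt hgle⟩) a := by
    intro w hw a
    rw [Finset.mem_filter] at hw
    have hfix : cshift^[g] w = w := fix_gcd hn w d hw.2
    exact cnt_periodic hg0 hgle hgL w (periodic_of_fix hg0 hgle hfix) a
  rw [classSum_eq_prod]
  by_cases hdvd : ∀ a : A, L ∣ cnt u a
  · -- all multiplicities divisible by L
    have hsum : ∑ a, cnt u a / L = g := by
      have h1 : L * (∑ a, cnt u a / L) = L * g := by
        rw [Finset.mul_sum]
        rw [Finset.sum_congr rfl (fun a _ => Nat.mul_div_cancel' (hdvd a))]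
        rw [cnt_total u, ← hgL]; ring
      exact Nat.eq_of_mul_eq_mul_left hL0 h1
    obtain ⟨v0, hv0⟩ := exists_word_of_cnt (fun a => cnt u a / L) hsum
    have hcnt_u : ∀ a, cnt u a = L * cnt v0 a := by
      intro a; rw [hv0 a, Nat.mul_div_cancel' (hdvd a)]
    have hcard : ((classF u).filter fun v => cshift^[d] v = v).card = (classF v0).card := by
      apply Finset.card_bij
        (i := fun w _ => (fun j : Fin g => w ⟨(j : ℕ), lt_of_lt_of_le j.isLt hgle⟩))
      · intro w hw
        rw [mem_classF]
        intro a
        have h1 := hfixcnt w hw a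
        have h2 : cnt w a = cnt u a := (mem_classF.mp (Finset.mem_filter.mp hw).1) a
        have h3 := hcnt_u a
        exact Nat.eq_of_mul_eq_mul_left hL0 (by omega)
      · intro w1 hw1 w2 hw2 heq
        rw [Finset.mem_filter] at hw1 hw2
        have hper1 := periodic_of_fix hg0 hgle (fix_gcd hn w1 d hw1.2)
        have hper2 := periodic_of_fix hg0 hgle (fix_gcd hn w2 d hw2.2)
        funext i
        rw [hper1 i, hper2 i]
        exact congrFun heq ⟨(i : ℕ) % g, Nat.mod_lt _ hg0⟩
      · intro v hv
        rw [mem_classF] at hv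
        refine ⟨(fun i : Fin n => v ⟨(i : ℕ) % g, Nat.mod_lt _ hg0⟩), ?_, ?_⟩
        · rw [Finset.mem_filter]
          refine ⟨?_, periodize_fix hg0 hgL hgd v⟩
          rw [mem_classF]
          intro a
          have hper : ∀ i : Fin n, (fun i : Fin n => v ⟨(i : ℕ) % g, Nat.mod_lt _ hg0⟩) i
              = (fun i : Fin n => v ⟨(i : ℕ) % g, Nat.mod_lt _ hg0⟩)
                ⟨(i : ℕ) % g, lt_of_lt_of_le (Nat.mod_lt _ hg0) hgle⟩ := by
            intro i
            simp only
            congr 1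
            ext
            exact (Nat.mod_mod_of_dvd _ (dvd_refl g)).symm
          rw [cnt_periodic hg0 hgle hgL _ hper a]
          have hres : (fun j : Fin g =>
              (fun i : Fin n => v ⟨(i : ℕ) % g, Nat.mod_lt _ hg0⟩)
                ⟨(j : ℕ), lt_of_lt_of_le j.isLt hgle⟩) = v := by
            funext j
            simp only
            congr 1
            ext
            exact Nat.mod_eq_of_lt j.isLt
          rw [hres, hv a, ← hcnt_u a]
        · funext j
          simp only
          congr 1
          ext
          exact Nat.mod_eq_of_lt j.isLt
    rw [hcard]
    have hone : ((classF v0).card : ℂ) = ∏ a : A, (Nat.choose (cardLE v0 a) (cnt v0 a) : ℂ) := by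
      have h1 := classSum_eq_prod (1 : ℂ) g v0
      rw [Finset.sum_congr rfl (fun w _ => one_pow _), Finset.sum_const, nsmul_eq_mul,
        mul_one] at h1
      rw [h1]
      apply Finset.prod_congr rfl
      intro a _
      have hq1 : ∀ j : ℕ, (1 : ℂ) ^ j = 1 ↔ 1 ∣ j := by intro j; simp
      have h2 := Bval_lucas (q := (1 : ℂ)) one_pos hq1 (cardLE v0 a) (cnt v0 a)
      rw [Nat.one_mul] at h2
      rw [h2, if_pos (one_dvd _), Nat.div_one]
    rw [hone]
    apply Finset.prod_congr rfl
    intro a _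
    have hLLE : L ∣ cardLE u a := by
      rw [cardLE_eq_sum]
      exact Finset.dvd_sum (fun b _ => hdvd b)
    have h2 : cardLE u a = L * (cardLE u a / L) := (Nat.mul_div_cancel' hLLE).symm
    have h3 := Bval_lucas hL0 hq (cardLE u a / L) (cnt u a)
    rw [← h2] at h3
    rw [h3, if_pos (hdvd a)]
    have h4 : cnt u a / L = cnt v0 a := by rw [hcnt_u a, Nat.mul_div_cancel_left _ hL0]
    have h5 : cardLE u a / L = cardLE v0 a := by
      have h6 : ∑ b ∈ Finset.univ.filter (fun b => b ≤ a), cnt u b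
          = L * ∑ b ∈ Finset.univ.filter (fun b => b ≤ a), cnt v0 b := by
        rw [Finset.mul_sum]; exact Finset.sum_congr rfl (fun b _ => hcnt_u b)
      rw [cardLE_eq_sum, cardLE_eq_sum, h6, Nat.mul_div_cancel_left _ hL0]
    rw [h4, h5]
  · -- some multiplicity not divisible: both sides vanish
    push_neg at hdvd
    obtain ⟨a0', ha0'⟩ := hdvd
    set bad := Finset.univ.filter (fun a : A => ¬ L ∣ cnt u a) with hbad
    have hbne : bad.Nonempty := ⟨a0', Finset.mem_filter.mpr ⟨Finset.mem_univ _, ha0'⟩⟩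
    set a0 := bad.max' hbne with ha0
    have ha0bad : ¬ L ∣ cnt u a0 := (Finset.mem_filter.mp (bad.max'_mem hbne)).2
    have hgood : ∀ b, a0 < b → L ∣ cnt u b := by
      intro b hb
      by_contra hcon
      exact absurd (bad.le_max' b (Finset.mem_filter.mpr ⟨Finset.mem_univ _, hcon⟩))
        (not_le.mpr hb)
    have hLHS : ((classF u).filter fun v => cshift^[d] v = v) = ∅ := by
      rw [Finset.eq_empty_iff_forall_notMem]
      intro w hw
      have h1 := hfixcnt w hw a0
      have h2 : cnt w a0 = cnt u a0 := (mem_classF.mp (Finset.mem_filter.mp hw).1) a0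
      exact ha0bad ⟨_, by rw [← h2, h1]⟩
    have hfac : Bval q (cardLE u a0) (cnt u a0) = 0 := by
      have hsplit : cardLE u a0 + ∑ b ∈ Finset.univ.filter (fun b => a0 < b), cnt u b = n := by
        have h8 := Finset.sum_filter_add_sum_filter_not Finset.univ (fun b => b ≤ a0) (cnt u)
        rw [cnt_total] at h8
        have h9 : (Finset.univ.filter (fun b : A => ¬ b ≤ a0))
            = Finset.univ.filter (fun b => a0 < b) := by
          apply Finset.filter_congr; intro b _; simp [not_le]
        rw [h9] at h8
        rw [cardLE_eq_sum]
        exact h8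
      have hS : L ∣ ∑ b ∈ Finset.univ.filter (fun b => a0 < b), cnt u b :=
        Finset.dvd_sum (fun b hb => hgood b (Finset.mem_filter.mp hb).2)
      have hLLE : L ∣ cardLE u a0 := by
        have h7 : cardLE u a0 = n - ∑ b ∈ Finset.univ.filter (fun b => a0 < b), cnt u b := by
          omega
        rw [h7]; exact Nat.dvd_sub hLn hS
      have h2 : cardLE u a0 = L * (cardLE u a0 / L) := (Nat.mul_div_cancel' hLLE).symm
      have h3 := Bval_lucas hL0 hq (cardLE u a0 / L) (cnt u a0)
      rw [← h2] at h3
      rw [h3, if_neg ha0bad]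
    rw [hLHS, Finset.prod_eq_zero (Finset.mem_univ a0) hfac]
    simp

end Main

lemma decomp {A : Type*} [LinearOrder A] [Fintype A] {n : ℕ}
    (hn : 0 < n) (d : ℕ) {q : ℂ}
    (hq : ∀ j : ℕ, q ^ j = 1 ↔ (n / Nat.gcd n d) ∣ j) :
    ∀ X : Finset (Fin n → A),
      (∀ σ : Equiv.Perm (Fin n), ∀ w ∈ X, (fun i => w (σ i)) ∈ X) →
      ((X.filter fun v => cshift^[d] v = v).card : ℂ) = ∑ w ∈ X, q ^ invNum w := by
  intro X
  induction X using Finset.strongInductionOn with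
  | _ X ih =>
  intro hX
  rcases Finset.eq_empty_or_nonempty X with rfl | ⟨u, hu⟩
  · simp
  · have hsub : classF u ⊆ X := by
      intro w hw
      obtain ⟨σ, hσ⟩ := exists_perm_of_cnt_eq (mem_classF.mp hw)
      rw [hσ]
      exact hX σ u hu
    set X' := X \ classF u with hX'
    have hssub : X' ⊂ X := Finset.sdiff_ssubset hsub ⟨u, self_mem_classF u⟩
    have hX'stable : ∀ σ : Equiv.Perm (Fin n), ∀ w ∈ X', (fun i => w (σ i)) ∈ X' := by
      intro σ w hw
      rw [hX', Finset.mem_sdiff] at hw ⊢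
      refine ⟨hX σ w hw.1, ?_⟩
      intro hc
      apply hw.2
      rw [mem_classF] at hc ⊢
      intro a
      rw [← cnt_comp_perm w σ a]
      exact hc a
    have hrec := ih X' hssub hX'stable
    have hclass := class_csp hn d hq u
    have hsum : ∑ w ∈ X, q ^ invNum w
        = (∑ w ∈ X', q ^ invNum w) + ∑ w ∈ classF u, q ^ invNum w :=
      (Finset.sum_sdiff hsub).symm
    have hcards : (X.filter fun v => cshift^[d] v = v).card
        = (X'.filter fun v => cshift^[d] v = v).card
          + ((classF u).filter fun v => cshift^[d] v = v).card := by
      rw [Finset.card_filter, Finset.card_filter, Finset.card_filter]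
      exact (Finset.sum_sdiff hsub).symm
    rw [hcards, hsum]
    push_cast
    rw [hrec, hclass]

end CSPaux

/-- If X ⊆ A^n (with A a finite linearly ordered alphabet, n ≥ 1)
is stable under the symmetric group acting on positions, then (X, X^inv(t), C)
exhibits the cyclic sieving phenomenon. -/
theorem stmt1 {A : Type*} [Fintype A] [LinearOrder A] {n : ℕ} (hn : 1 ≤ n)
    (X : Finset (Fin n → A))
    (hX : ∀ σ : Equiv.Perm (Fin n), ∀ w ∈ X, (fun i => w (σ i)) ∈ X) :
    exhibitsCSP X invNum := by
  intro d
  have hn0 : 0 < n := hn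
  set ζ : ℂ := Complex.exp (2 * (Real.pi : ℂ) * Complex.I / n) with hζdef
  have hζ : IsPrimitiveRoot ζ n := Complex.isPrimitiveRoot_exp n (by omega)
  set q : ℂ := ζ ^ d with hqdef
  have hexp : ∀ v : Fin n → A, ζ ^ (d * invNum v) = q ^ invNum v := by
    intro v; rw [hqdef, ← pow_mul]
  have hq : ∀ j : ℕ, q ^ j = 1 ↔ (n / Nat.gcd n d) ∣ j := by
    intro j
    rw [hqdef, ← pow_mul, hζ.pow_eq_one_iff_dvd]
    have hg0 : 0 < Nat.gcd n d := Nat.gcd_pos_of_pos_left d hn0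
    have hgn : Nat.gcd n d ∣ n := Nat.gcd_dvd_left n d
    have hgd : Nat.gcd n d ∣ d := Nat.gcd_dvd_right n d
    have hco : Nat.Coprime (n / Nat.gcd n d) (d / Nat.gcd n d) :=
      Nat.coprime_div_gcd_div_gcd hg0
    have e0 : Nat.gcd n d * (n / Nat.gcd n d) = n := Nat.mul_div_cancel' hgn
    have e0' : Nat.gcd n d * (d / Nat.gcd n d) = d := Nat.mul_div_cancel' hgd
    constructor
    · intro h
      obtain ⟨c, hc⟩ := h
      have h1 : n / Nat.gcd n d ∣ (d / Nat.gcd n d) * j := by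
        refine ⟨c, ?_⟩
        apply Nat.eq_of_mul_eq_mul_left hg0
        calc Nat.gcd n d * (d / Nat.gcd n d * j) = (Nat.gcd n d * (d / Nat.gcd n d)) * j := by
              ring
          _ = d * j := by rw [e0']
          _ = n * c := hc
          _ = (Nat.gcd n d * (n / Nat.gcd n d)) * c := by rw [e0]
          _ = Nat.gcd n d * (n / Nat.gcd n d * c) := by ring
      exact Nat.Coprime.dvd_of_dvd_mul_left hco h1
    · intro h
      obtain ⟨c, hc⟩ := h
      refine ⟨(d / Nat.gcd n d) * c, ?_⟩
      calc d * j = (Nat.gcd n d * (d / Nat.gcd n d)) * ((n / Nat.gcd n d) * c) := by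
            rw [e0', hc]
        _ = (Nat.gcd n d * (n / Nat.gcd n d)) * ((d / Nat.gcd n d) * c) := by ring
        _ = n * (d / Nat.gcd n d * c) := by rw [e0]
  rw [Finset.sum_congr rfl (fun v _ => hexp v)]
  exact CSPaux.decomp hn0 d hq X hX
end

section
/- Let n be a prime number and X ⊆ {0,1}^n a finite subset of binary words (ordered 0 < 1) stable under the cyclic shift c. Then the triple (X, X^inv(t), C) exhibits the cyclic sieving phenomenon. -/
lemma cshift_iterate {A : Type*} {n : ℕ} (m : ℕ) (w : Fin n → A) (i : Fin n) :
    cshift^[m] w i = w ⟨((i : ℕ) + m) % n, Nat.mod_lt _ i.pos⟩ := by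
  induction m generalizing w with
  | zero => simp [Nat.mod_eq_of_lt i.isLt]
  | succ m ih =>
    rw [Function.iterate_succ_apply, ih]
    simp only [cshift]
    congr 1
    ext
    simp only []
    rw [Nat.mod_add_mod, Nat.add_assoc]
    
lemma cshift_iterate_n {A : Type*} {n : ℕ} (w : Fin n → A) : cshift^[n] w = w := by
  funext i
  rw [cshift_iterate]
  congr 1
  ext
  simp [Nat.add_mod_right, Nat.mod_eq_of_lt i.isLt]

lemma cshift_iterate_mod {A : Type*} {n : ℕ} (hn : 0 < n) (m : ℕ) (w : Fin n → A) :
    cshift^[m] w = cshift^[m % n] w := by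
  funext i
  rw [cshift_iterate, cshift_iterate]
  congr 1
  rw [Fin.mk_eq_mk]
  conv_lhs => rw [Nat.add_mod]
  conv_rhs => rw [Nat.add_mod, Nat.mod_mod_of_dvd _ dvd_rfl]

lemma cshift_injective {A : Type*} {n : ℕ} :
    Function.Injective (cshift : (Fin n → A) → (Fin n → A)) := by
  intro u v huv
  have h : ∀ w : Fin n → A, cshift^[n-1] (cshift w) = w := by
    intro w
    rw [← Function.iterate_succ_apply]
    rcases Nat.eq_zero_or_pos n with h0 | h0
    · subst h0; funext i; exact absurd i.isLt (by omega)
    · rw [Nat.succ_eq_add_one, Nat.sub_add_cancel h0, cshift_iterate_n]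
  rw [← h u, ← h v, huv]

lemma const_of_cshift_fixed {A : Type*} {n : ℕ} {w : Fin n → A} (hw : cshift w = w)
    (i : Fin n) : w i = w ⟨0, i.pos⟩ := by
  have h := cshift_iterate (n := n) (i : ℕ) w ⟨0, i.pos⟩
  rw [Function.iterate_fixed hw] at h
  rw [h]
  congr 1
  ext
  simp [Nat.mod_eq_of_lt i.isLt]

lemma cshift_fixed_of_const {A : Type*} {n : ℕ} {w : Fin n → A}
    (hc : ∀ i j : Fin n, w i = w j) : cshift w = w := by
  funext i; exact hc _ _

lemma invNum_const {A : Type*} [LinearOrder A] {n : ℕ} {w : Fin n → A}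
    (hc : ∀ i j : Fin n, w i = w j) : invNum w = 0 := by
  rw [invNum, Finset.card_eq_zero, Finset.filter_eq_empty_iff]
  rintro p - ⟨-, hlt⟩
  rw [hc p.2 p.1] at hlt
  exact lt_irrefl _ hlt

def rotF {n : ℕ} (i : Fin n) : Fin n := ⟨((i : ℕ) + 1) % n, Nat.mod_lt _ i.pos⟩
def rotB {n : ℕ} (i : Fin n) : Fin n := ⟨((i : ℕ) + (n - 1)) % n, Nat.mod_lt _ i.pos⟩

lemma cshift_apply {A : Type*} {n : ℕ} (w : Fin n → A) (i : Fin n) :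
    cshift w i = w (rotF i) := rfl

lemma rotB_rotF {n : ℕ} (i : Fin n) : rotB (rotF i) = i := by
  have hn : 0 < n := i.pos
  ext
  show ((((i : ℕ) + 1) % n) + (n - 1)) % n = (i : ℕ)
  rw [Nat.mod_add_mod]
  have h : (i : ℕ) + 1 + (n - 1) = (i : ℕ) + n := by omega
  rw [h, Nat.add_mod_right, Nat.mod_eq_of_lt i.isLt]

lemma rotF_rotB {n : ℕ} (i : Fin n) : rotF (rotB i) = i := by
  have hn : 0 < n := i.pos
  ext
  show ((((i : ℕ) + (n - 1)) % n) + 1) % n = (i : ℕ)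
  rw [Nat.mod_add_mod]
  have h : (i : ℕ) + (n - 1) + 1 = (i : ℕ) + n := by omega
  rw [h, Nat.add_mod_right, Nat.mod_eq_of_lt i.isLt]

lemma wt_cshift {n : ℕ} (w : Fin n → Bool) : wt (cshift w) = wt w := by
  unfold wt
  apply Finset.card_nbij' rotF rotB
  · intro a ha
    simp only [Finset.mem_coe, Finset.mem_filter, Finset.mem_univ, true_and] at ha ⊢
    simp only [cshift_apply] at ha ⊢
    exact ha
  · intro a ha
    simp only [Finset.mem_coe, Finset.mem_filter, Finset.mem_univ, true_and] at ha ⊢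
    simp only [cshift_apply] at ha ⊢
    rw [rotF_rotB]; exact ha
  · intro a _; exact rotB_rotF a
  · intro a _; exact rotF_rotB a
lemma rotF_val_of_lt {n : ℕ} {i : Fin n} (h : (i : ℕ) < n - 1) :
    ((rotF i : Fin n) : ℕ) = (i : ℕ) + 1 :=
  Nat.mod_eq_of_lt (by omega)

lemma rotB_val_of_pos {n : ℕ} {i : Fin n} (h : 0 < (i : ℕ)) :
    ((rotB i : Fin n) : ℕ) = (i : ℕ) - 1 := by
  have hn : (i : ℕ) < n := i.isLt
  show ((i : ℕ) + (n - 1)) % n = (i : ℕ) - 1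
  have h2 : (i : ℕ) + (n - 1) = ((i : ℕ) - 1) + n := by omega
  rw [h2, Nat.add_mod_right, Nat.mod_eq_of_lt (by omega)]

lemma invNum_cshift {n : ℕ} (hn : 0 < n) (w : Fin n → Bool) :
    invNum (cshift w) + (if w ⟨0, hn⟩ = true then n - wt w else 0)
      = invNum w + (if w ⟨0, hn⟩ = true then 0 else wt w) := by
  set z0 : Fin n := ⟨0, hn⟩ with hz0
  set L : Fin n := ⟨n - 1, by omega⟩ with hL
  have hrotFL : rotF L = z0 := by
    ext
    show (n - 1 + 1) % n = 0
    rw [Nat.sub_add_cancel hn, Nat.mod_self]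
  set Sc := Finset.univ.filter
    (fun p : Fin n × Fin n => p.1 < p.2 ∧ cshift w p.2 < cshift w p.1) with hSc
  set Sw := Finset.univ.filter
    (fun p : Fin n × Fin n => p.1 < p.2 ∧ w p.2 < w p.1) with hSw
  have hc : invNum (cshift w) = Sc.card := rfl
  have hwc : invNum w = Sw.card := rfl
  have hsplitc : (Sc.filter (fun p => p.2 = L)).card
      + (Sc.filter (fun p => ¬ p.2 = L)).card = Sc.card :=
    Finset.card_filter_add_card_filter_not _
  have hsplitw : (Sw.filter (fun p => p.1 = z0)).card
      + (Sw.filter (fun p => ¬ p.1 = z0)).card = Sw.card :=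
    Finset.card_filter_add_card_filter_not _
  -- the main bijection
  have hA : (Sc.filter (fun p => ¬ p.2 = L)).card
      = (Sw.filter (fun p => ¬ p.1 = z0)).card := by
    apply Finset.card_nbij' (fun p => (rotF p.1, rotF p.2)) (fun p => (rotB p.1, rotB p.2))
    · rintro ⟨a, b⟩ hab
      simp only [hSc, hSw, Finset.mem_coe, Finset.mem_filter, Finset.mem_univ, true_and] at hab ⊢
      simp only [cshift_apply] at hab ⊢
      obtain ⟨⟨hlt, hw⟩, hne⟩ := hab
      have hb : (b : ℕ) < n - 1 := by
        have := b.isLt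
        have : (b : ℕ) ≠ n - 1 := fun h => hne (by ext; exact h)
        omega
      have ha : (a : ℕ) < n - 1 := by
        have := Fin.lt_def.mp hlt; omega
      refine ⟨⟨?_, hw⟩, ?_⟩
      · rw [Fin.lt_def, rotF_val_of_lt ha, rotF_val_of_lt hb]
        have := Fin.lt_def.mp hlt; omega
      · intro h
        have := congrArg Fin.val h
        rw [rotF_val_of_lt ha] at this
        simp [hz0] at this
    · rintro ⟨a, b⟩ hab
      simp only [hSc, hSw, Finset.mem_coe, Finset.mem_filter, Finset.mem_univ, true_and] at hab ⊢
      simp only [cshift_apply] at hab ⊢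
      obtain ⟨⟨hlt, hw⟩, hne⟩ := hab
      have ha : 0 < (a : ℕ) := by
        rcases Nat.eq_zero_or_pos (a : ℕ) with h | h
        · exact absurd (by ext; exact h) hne
        · exact h
      have hb : 0 < (b : ℕ) := lt_trans ha (Fin.lt_def.mp hlt)
      refine ⟨⟨?_, ?_⟩, ?_⟩
      · rw [Fin.lt_def, rotB_val_of_pos ha, rotB_val_of_pos hb]
        have := Fin.lt_def.mp hlt; omega
      · rw [rotF_rotB, rotF_rotB]; exact hw
      · intro h
        have := congrArg Fin.val h
        rw [rotB_val_of_pos hb] at this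
        simp only [hL] at this
        have := b.isLt
        omega
    · rintro ⟨a, b⟩ -
      simp [rotB_rotF]
    · rintro ⟨a, b⟩ -
      simp [rotF_rotB]
  -- the wrap-around part of Sc
  have hB : (Sc.filter (fun p => p.2 = L)).card
      = (if w z0 = true then 0 else wt w) := by
    by_cases h0 : w z0 = true
    · rw [if_pos h0]
      rw [Finset.card_eq_zero, Finset.filter_eq_empty_iff]
      rintro ⟨a, b⟩ hab
      intro hb
      simp only [hSc, Finset.mem_filter, Finset.mem_univ, true_and] at hab
      simp only [cshift_apply] at hab
      obtain ⟨-, hw⟩ := hab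
      dsimp only at hb hw
      rw [hb, hrotFL, h0] at hw
      exact absurd hw (by simp)
    · rw [if_neg h0]
      have h0' : w z0 = false := by simpa using h0
      unfold wt
      apply Finset.card_nbij' (fun p => rotF p.1) (fun a => (rotB a, L))
      · rintro ⟨a, b⟩ hab
        simp only [Finset.mem_coe, Finset.mem_filter, hSc, Finset.mem_univ, true_and] at hab ⊢
        simp only [cshift_apply] at hab ⊢
        obtain ⟨⟨hlt, hw⟩, hb⟩ := hab
        rw [hb, hrotFL] at hw
        exact (Bool.lt_iff.mp hw).2
      · intro a ha
        simp only [Finset.mem_coe, Finset.mem_filter, hSc, Finset.mem_univ, true_and, cshift_apply] at ha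
        have hane : 0 < (a : ℕ) := by
          rcases Nat.eq_zero_or_pos (a : ℕ) with h | h
          · exfalso
            apply h0
            rw [show z0 = a from by ext; exact h.symm]
            exact ha
          · exact h
        refine Finset.mem_filter.mpr ⟨Finset.mem_filter.mpr ⟨Finset.mem_univ _, ?_, ?_⟩, rfl⟩
        · rw [Fin.lt_def, rotB_val_of_pos hane]
          show (a : ℕ) - 1 < n - 1
          have := a.isLt
          omega
        · show cshift w L < cshift w (rotB a)
          rw [cshift_apply, cshift_apply, hrotFL, rotF_rotB, ha, h0']
          decide
      · rintro ⟨a, b⟩ hab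
        simp only [Finset.mem_coe, Finset.mem_filter] at hab
        obtain ⟨-, hb⟩ := hab
        dsimp only at hb ⊢
        rw [rotB_rotF, hb]
      · intro a _
        exact rotF_rotB a
  -- the wrap-around part of Sw
  have hC : (Sw.filter (fun p => p.1 = z0)).card
      = (if w z0 = true then n - wt w else 0) := by
    have hfc : (Finset.univ.filter (fun i : Fin n => w i = false)).card = n - wt w := by
      have := Finset.card_filter_add_card_filter_not
        (s := (Finset.univ : Finset (Fin n))) (p := fun i : Fin n => w i = true)
      simp only [Finset.card_univ, Fintype.card_fin] at this
      have he : (Finset.univ.filter (fun i : Fin n => ¬ w i = true))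
          = (Finset.univ.filter (fun i : Fin n => w i = false)) := by
        apply Finset.filter_congr
        intro i _
        simp
      rw [he] at this
      have : wt w + (Finset.univ.filter (fun i : Fin n => w i = false)).card = n := this
      omega
    by_cases h0 : w z0 = true
    · rw [if_pos h0, ← hfc]
      apply Finset.card_nbij' (fun p => p.2) (fun a => (z0, a))
      · rintro ⟨a, b⟩ hab
        simp only [Finset.mem_coe, Finset.mem_filter, hSw, Finset.mem_univ, true_and] at hab ⊢
        obtain ⟨⟨hlt, hw⟩, ha⟩ := hab
        rw [ha, h0] at hw
        exact (Bool.lt_iff.mp hw).1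
      · intro a ha
        simp only [Finset.mem_coe, Finset.mem_filter, Finset.mem_univ, true_and] at ha
        refine Finset.mem_filter.mpr ⟨Finset.mem_filter.mpr ⟨Finset.mem_univ _, ?_, ?_⟩, rfl⟩
        · show z0 < a
          rw [Fin.lt_def]
          show 0 < (a : ℕ)
          rcases Nat.eq_zero_or_pos (a : ℕ) with h | h
          · exfalso
            rw [show a = z0 by ext; exact h, h0] at ha
            exact absurd ha (by simp)
          · exact h
        · show w a < w z0
          rw [ha, h0]
          decide
      · rintro ⟨a, b⟩ hab
        simp only [Finset.mem_coe, Finset.mem_filter] at hab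
        obtain ⟨-, ha⟩ := hab
        dsimp only at ha ⊢
        rw [ha]
      · intro a _
        rfl
    · rw [if_neg h0]
      rw [Finset.card_eq_zero, Finset.filter_eq_empty_iff]
      rintro ⟨a, b⟩ hab
      intro ha
      simp only [Finset.mem_filter, hSw, Finset.mem_univ, true_and] at hab
      obtain ⟨-, hw⟩ := hab
      dsimp only at ha hw
      rw [ha] at hw
      have := (Bool.lt_iff.mp hw).2
      exact h0 this
  omega
lemma wt_le {n : ℕ} (w : Fin n → Bool) : wt w ≤ n := by
  calc wt w ≤ (Finset.univ : Finset (Fin n)).card := Finset.card_filter_le _ _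
  _ = n := by simp

lemma cshift_fixed_of_wt_zero {n : ℕ} {w : Fin n → Bool} (h : wt w = 0) : cshift w = w := by
  apply cshift_fixed_of_const
  have h2 : ∀ i : Fin n, ¬ w i = true := by
    intro i
    have := Finset.card_eq_zero.mp h
    intro hw
    have : i ∈ Finset.univ.filter (fun i => w i = true) := by
      simp [hw]
    rw [Finset.card_eq_zero.mp h] at this
    exact absurd this (Finset.notMem_empty i)
  intro i j
  rw [Bool.eq_false_iff.mpr (h2 i), Bool.eq_false_iff.mpr (h2 j)]

lemma cshift_fixed_of_wt_n {n : ℕ} {w : Fin n → Bool} (h : wt w = n) : cshift w = w := by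
  apply cshift_fixed_of_const
  have h2 : Finset.univ.filter (fun i => w i = true) = Finset.univ := by
    apply Finset.eq_univ_of_card
    show wt w = _
    rw [h]; simp
  have h3 : ∀ i : Fin n, w i = true := by
    intro i
    have : i ∈ Finset.univ.filter (fun i => w i = true) := by
      rw [h2]; exact Finset.mem_univ i
    exact (Finset.mem_filter.mp this).2
  intro i j
  rw [h3 i, h3 j]


theorem stmt8aux {n : ℕ} (hp : n.Prime)
    (X : Finset (Fin n → Bool)) (hX : ∀ w ∈ X, cshift w ∈ X) :
    ∀ d : ℕ,
    ((X.filter fun v => cshift^[d] v = v).card : ℂ) =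
      ∑ v ∈ X, Complex.exp (2 * (Real.pi : ℂ) * Complex.I / n) ^ (d * invNum v) := by
  intro d
  have hn : 0 < n := hp.pos
  have hn2 : 2 ≤ n := hp.two_le
  set ζ := Complex.exp (2 * (Real.pi : ℂ) * Complex.I / n) with hζ
  have hprim : IsPrimitiveRoot ζ n := Complex.isPrimitiveRoot_exp n (by omega)
  have hζ1 : ζ ^ n = 1 := hprim.pow_eq_one
  have hone : ∀ m : ℕ, (ζ ^ m = 1 ↔ n ∣ m) := fun m => hprim.pow_eq_one_iff_dvd m
  by_cases hdn : n ∣ d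
  · have hfix : ∀ v : Fin n → Bool, cshift^[d] v = v := by
      intro v
      obtain ⟨q, rfl⟩ := hdn
      rw [cshift_iterate_mod hn, Nat.mul_mod_right, Function.iterate_zero_apply]
    rw [Finset.filter_true_of_mem (fun v _ => hfix v)]
    have h1 : ∀ v ∈ X, ζ ^ (d * invNum v) = (1 : ℂ) := by
      intro v _
      exact (hone _).mpr (hdn.mul_right _)
    rw [Finset.sum_congr rfl h1, Finset.sum_const, nsmul_eq_mul, mul_one]
  · -- d coprime to n
    have hco : Nat.Coprime d n := ((Nat.Prime.coprime_iff_not_dvd hp).mpr hdn).symm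
    have hfiff : ∀ v : Fin n → Bool, (cshift^[d] v = v ↔ cshift v = v) := by
      intro v
      constructor
      · intro h
        obtain ⟨m, -, hm⟩ := Nat.exists_mul_mod_eq_one_of_coprime hco (by omega)
        have h2 : cshift^[d * m] v = v := by
          rw [Function.iterate_mul]
          exact Function.iterate_fixed h m
        rw [cshift_iterate_mod hn, hm] at h2
        simpa using h2
      · intro h
        exact Function.iterate_fixed h d
    rw [Finset.filter_congr (fun v _ => hfiff v)]
    -- split the sum
    rw [← Finset.sum_filter_add_sum_filter_not X (fun v => cshift v = v)
      (fun v => ζ ^ (d * invNum v))]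
    set F := X.filter (fun v => cshift v = v) with hF
    set Y := X.filter (fun v => ¬ cshift v = v) with hYdef
    have hFsum : ∑ v ∈ F, ζ ^ (d * invNum v) = (F.card : ℂ) := by
      rw [Finset.sum_congr rfl (fun v hv => ?_), Finset.sum_const, nsmul_eq_mul, mul_one]
      have hfix : cshift v = v := (Finset.mem_filter.mp hv).2
      have : invNum v = 0 := invNum_const (fun i j => by
        rw [const_of_cshift_fixed hfix i, const_of_cshift_fixed hfix j])
      rw [this, Nat.mul_zero, pow_zero]
    -- properties of Y
    have hYc : ∀ v ∈ Y, cshift v ∈ Y := by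
      intro v hv
      rw [hYdef, Finset.mem_filter] at hv ⊢
      exact ⟨hX _ hv.1, fun h => hv.2 (cshift_injective h)⟩
    have hXiter : ∀ m : ℕ, ∀ v ∈ X, cshift^[m] v ∈ X := by
      intro m
      induction m with
      | zero => intro v hv; simpa using hv
      | succ m ih =>
        intro v hv
        rw [Function.iterate_succ_apply']
        exact hX _ (ih v hv)
    have hs1 : (n-1).succ = n := by omega
    have hiter_right : ∀ v : Fin n → Bool, cshift (cshift^[n-1] v) = v := by
      intro v
      rw [(Function.iterate_succ_apply' cshift (n-1) v).symm, hs1, cshift_iterate_n]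
    have hiter_left : ∀ v : Fin n → Bool, cshift^[n-1] (cshift v) = v := by
      intro v
      rw [(Function.iterate_succ_apply cshift (n-1) v).symm, hs1, cshift_iterate_n]
    have hYb : ∀ v ∈ Y, cshift^[n-1] v ∈ Y := by
      intro v hv
      rw [hYdef, Finset.mem_filter] at hv ⊢
      refine ⟨hXiter _ _ hv.1, fun h => hv.2 ?_⟩
      have h3 : cshift^[n-1] v = v := by
        conv_rhs => rw [← hiter_right v, h]
      rw [← h3]
      exact h
    -- the per-element twist
    have hstep : ∀ v : Fin n → Bool,
        ζ ^ (d * invNum (cshift v)) = ζ ^ (d * invNum v) * ζ ^ (d * wt v) := by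
      intro v
      have h2 := invNum_cshift hn v
      have hwle := wt_le v
      by_cases h0 : v ⟨0, hn⟩ = true
      · rw [if_pos h0, if_pos h0] at h2
        have e1 : invNum (cshift v) + (n - wt v) = invNum v := by omega
        have e2 : ζ ^ (d * invNum (cshift v)) * ζ ^ (d * (n - wt v)) = ζ ^ (d * invNum v) := by
          rw [← pow_add, ← Nat.mul_add, e1]
        have e3 : ζ ^ (d * (n - wt v)) * ζ ^ (d * wt v) = 1 := by
          rw [← pow_add, ← Nat.mul_add, Nat.sub_add_cancel hwle, mul_comm d n, pow_mul,
            hζ1, one_pow]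
        calc ζ ^ (d * invNum (cshift v))
            = ζ ^ (d * invNum (cshift v)) * (ζ ^ (d * (n - wt v)) * ζ ^ (d * wt v)) := by
              rw [e3, mul_one]
          _ = (ζ ^ (d * invNum (cshift v)) * ζ ^ (d * (n - wt v))) * ζ ^ (d * wt v) := by
              ring
          _ = ζ ^ (d * invNum v) * ζ ^ (d * wt v) := by rw [e2]
      · rw [if_neg h0, if_neg h0] at h2
        rw [← pow_add, ← Nat.mul_add]
        have e : invNum (cshift v) = invNum v + wt v := by omega
        rw [e]
    -- nontrivial weight on Y
    have hwY : ∀ v ∈ Y, 0 < wt v ∧ wt v < n := by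
      intro v hv
      rw [hYdef, Finset.mem_filter] at hv
      constructor
      · rcases Nat.eq_zero_or_pos (wt v) with h | h
        · exact absurd (cshift_fixed_of_wt_zero h) hv.2
        · exact h
      · rcases Nat.lt_or_ge (wt v) n with h | h
        · exact h
        · have : wt v = n := le_antisymm (wt_le v) h
          exact absurd (cshift_fixed_of_wt_n this) hv.2
    have hxne : ∀ v ∈ Y, ζ ^ (d * wt v) ≠ 1 := by
      intro v hv h
      rw [hone] at h
      rcases (Nat.Prime.dvd_mul hp).mp h with h | h
      · exact hdn h
      · obtain ⟨h1, h2⟩ := hwY v hv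
        have := Nat.le_of_dvd h1 h
        omega
    -- invariance of the twisted sums
    have hsums : ∀ j : ℕ,
        ∑ v ∈ Y, ζ ^ (d * invNum v) * (ζ ^ (d * wt v)) ^ j
          = ∑ v ∈ Y, ζ ^ (d * invNum v) := by
      intro j
      induction j with
      | zero => simp
      | succ j ih =>
        rw [← ih]
        apply Finset.sum_nbij' (i := cshift) (j := cshift^[n-1]) hYc hYb
          (fun a _ => hiter_left a) (fun a _ => hiter_right a)
        intro v hv
        rw [hstep v, wt_cshift]
        ring
    -- the geometric sum kills Y
    have hYsum : ∑ v ∈ Y, ζ ^ (d * invNum v) = 0 := by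
      have hgeo : ∀ v ∈ Y, ∑ j ∈ Finset.range n, (ζ ^ (d * wt v)) ^ j = 0 := by
        intro v hv
        rw [geom_sum_eq (hxne v hv)]
        have : (ζ ^ (d * wt v)) ^ n = 1 := by
          rw [← pow_mul, mul_comm (d * wt v) n, pow_mul, hζ1, one_pow]
        rw [this, sub_self, zero_div]
      have hbig : (n : ℂ) * (∑ v ∈ Y, ζ ^ (d * invNum v)) = 0 := by
        calc (n : ℂ) * (∑ v ∈ Y, ζ ^ (d * invNum v))
            = ∑ _j ∈ Finset.range n, ∑ v ∈ Y, ζ ^ (d * invNum v) := by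
              rw [Finset.sum_const, Finset.card_range, nsmul_eq_mul]
          _ = ∑ j ∈ Finset.range n, ∑ v ∈ Y, ζ ^ (d * invNum v) * (ζ ^ (d * wt v)) ^ j := by
              exact Finset.sum_congr rfl (fun j _ => (hsums j).symm)
          _ = ∑ v ∈ Y, ∑ j ∈ Finset.range n, ζ ^ (d * invNum v) * (ζ ^ (d * wt v)) ^ j :=
              Finset.sum_comm
          _ = ∑ v ∈ Y, ζ ^ (d * invNum v) * ∑ j ∈ Finset.range n, (ζ ^ (d * wt v)) ^ j := by
              exact Finset.sum_congr rfl (fun v _ => (Finset.mul_sum _ _ _).symm)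
          _ = 0 := by
              rw [Finset.sum_congr rfl (fun v hv => by rw [hgeo v hv, mul_zero])]
              exact Finset.sum_const_zero
      have hnne : (n : ℂ) ≠ 0 := Nat.cast_ne_zero.mpr (by omega)
      exact (mul_eq_zero.mp hbig).resolve_left hnne
    rw [hFsum, hYsum, add_zero]

/-- when n is prime, every shift-stable finite set of binary words
X ⊆ {0,1}^n gives a CSP triple (X, X^inv(t), C). -/
theorem stmt8 {n : ℕ} (hp : n.Prime)
    (X : Finset (Fin n → Bool)) (hX : ∀ w ∈ X, cshift w ∈ X) :
    exhibitsCSP X invNum := by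
  unfold exhibitsCSP
  exact stmt8aux hp X hX
end
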